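/- Any real-valued logic that satisfies P2 is an extension of Łukasiewicz logic: if L = Taut(T,*) for some continuous t-norm * and algebra of truth values T, and L satisfies P2, then Taut([0,1],⊙) ⊆ L. -/

import Mathlib

open Set

noncomputable section

/-- The real unit interval `[0,1]` as a subset of `ℝ`. -/
def I01 : Set ℝ := Set.Icc 0 1

/-- A continuous t-norm on `[0,1]`. -/
structure ContTNorm where
  mul : ℝ → ℝ → ℝ
  maps_to : ∀ x ∈ I01, ∀ y ∈ I01, mul x y ∈ I01
  continuousOn : ContinuousOn (fun p : ℝ × ℝ => mul p.1 p.2) (I01 ×ˢ I01)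
  assoc : ∀ x ∈ I01, ∀ y ∈ I01, ∀ z ∈ I01, mul (mul x y) z = mul x (mul y z)
  comm : ∀ x ∈ I01, ∀ y ∈ I01, mul x y = mul y x
  mono : ∀ a ∈ I01, ∀ b ∈ I01, ∀ c ∈ I01, b ≤ c → mul a b ≤ mul a c
  one_mul' : ∀ x ∈ I01, mul 1 x = x

/-- The residuum of a t-norm: `x →* y := sup { c ∈ [0,1] | x * c ≤ y }`. -/
def resid (t : ContTNorm) (x y : ℝ) : ℝ :=
  sSup {c | c ∈ I01 ∧ t.mul x c ≤ y}

/-- An algebra of truth values for the t-norm `t`: a subset of `[0,1]` containing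
`0` and `1` and closed under `t.mul` and its residuum. -/
structure TruthAlg (t : ContTNorm) where
  carrier : Set ℝ
  subset : carrier ⊆ I01
  zero_mem : (0:ℝ) ∈ carrier
  one_mem : (1:ℝ) ∈ carrier
  mul_mem : ∀ x ∈ carrier, ∀ y ∈ carrier, t.mul x y ∈ carrier
  resid_mem : ∀ x ∈ carrier, ∀ y ∈ carrier, resid t x y ∈ carrier

/-- Propositional formulas over countably many variables with `&`, `→`, `⊥`. -/
inductive Formula : Type
  | var : ℕ → Formula
  | bot : Formula
  | conj : Formula → Formula → Formula
  | impl : Formula → Formula → Formula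

/-- `α ↔ β := (α → β) & (β → α)`. -/
def Formula.iff (a b : Formula) : Formula := .conj (.impl a b) (.impl b a)

/-- The valuation determined by an assignment `v` of reals to the variables. -/
def eval (t : ContTNorm) (v : ℕ → ℝ) : Formula → ℝ
  | .var i => v i
  | .bot => 0
  | .conj a b => t.mul (eval t v a) (eval t v b)
  | .impl a b => resid t (eval t v a) (eval t v b)

/-- A valuation into `(T, t)` is (identified with) an assignment of values of `T`
to the propositional variables. -/
def IsValuation (t : ContTNorm) (T : TruthAlg t) (v : ℕ → ℝ) : Prop :=
  ∀ i, v i ∈ T.carrier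

/-- The logic induced by `(T, t)`: all formulas true to degree 1 under every valuation. -/
def Taut (t : ContTNorm) (T : TruthAlg t) : Set Formula :=
  {α | ∀ v : ℕ → ℝ, IsValuation t T v → eval t v α = 1}

/-- Principle P1. -/
def P1 (L : Set Formula) : Prop :=
  ∀ (t : ContTNorm) (T : TruthAlg t), Taut t T = L →
    ∀ α β : Formula,
      (Formula.iff α β ∈ L ↔
        ∀ v : ℕ → ℝ, IsValuation t T v → (eval t v α = 1 ↔ eval t v β = 1))

/-- Principle P2. -/
def P2 (L : Set Formula) : Prop :=
  ∀ (t : ContTNorm) (T : TruthAlg t), Taut t T = L →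
    ∀ v w : ℕ → ℝ, IsValuation t T v → IsValuation t T w → v ≠ w →
      ∃ α : Formula, 0 < eval t v α ∧ eval t w α = 0

/-- The Gödel t-norm: minimum. -/
def minT : ContTNorm where
  mul := fun x y => min x y
  maps_to := by
    rintro x ⟨hx0, hx1⟩ y ⟨hy0, hy1⟩
    exact ⟨le_min hx0 hy0, min_le_of_left_le hx1⟩
  continuousOn := (continuous_fst.min continuous_snd).continuousOn
  assoc := fun x _ y _ z _ => min_assoc x y z
  comm := fun x _ y _ => min_comm x y
  mono := fun a _ b _ c _ h => min_le_min le_rfl h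
  one_mul' := by rintro x ⟨hx0, hx1⟩; exact min_eq_right hx1

/-- The Łukasiewicz t-norm: `x ⊙ y = max 0 (x + y - 1)`. -/
def lukT : ContTNorm where
  mul := fun x y => max 0 (x + y - 1)
  maps_to := by
    rintro x ⟨hx0, hx1⟩ y ⟨hy0, hy1⟩
    exact ⟨le_max_left _ _, max_le zero_le_one (by linarith)⟩
  continuousOn :=
    (continuous_const.max ((continuous_fst.add continuous_snd).sub continuous_const)).continuousOn
  assoc := by
    rintro x ⟨hx0, hx1⟩ y ⟨hy0, hy1⟩ z ⟨hz0, hz1⟩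
    simp only [max_def]
    split_ifs <;> linarith
  comm := by intro x _ y _; rw [add_comm]
  mono := by
    rintro a _ b _ c _ h
    exact max_le_max le_rfl (by linarith)
  one_mul' := by
    rintro x ⟨hx0, hx1⟩
    rw [show (1:ℝ) + x - 1 = x by ring, max_eq_right hx0]

/-- The product t-norm: ordinary multiplication. -/
def prodT : ContTNorm where
  mul := fun x y => x * y
  maps_to := by
    rintro x ⟨hx0, hx1⟩ y ⟨hy0, hy1⟩
    exact ⟨mul_nonneg hx0 hy0, by nlinarith⟩
  continuousOn := (continuous_fst.mul continuous_snd).continuousOn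
  assoc := fun x _ y _ z _ => mul_assoc x y z
  comm := fun x _ y _ => mul_comm x y
  mono := by rintro a ⟨ha0, _⟩ b _ c _ h; exact mul_le_mul_of_nonneg_left h ha0
  one_mul' := fun x _ => one_mul x

lemma ContTNorm.mul_zero' (t : ContTNorm) {x : ℝ} (hx : x ∈ I01) : t.mul x 0 = 0 := by
  have h01 : (0:ℝ) ∈ I01 := ⟨le_rfl, zero_le_one⟩
  have h11 : (1:ℝ) ∈ I01 := ⟨zero_le_one, le_rfl⟩
  have h1 : t.mul x 0 = t.mul 0 x := t.comm x hx 0 h01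
  have h2 : t.mul 0 x ≤ t.mul 0 1 := t.mono 0 h01 x hx 1 h11 hx.2
  have h3 : t.mul 0 1 = t.mul 1 0 := t.comm 0 h01 1 h11
  have h4 : t.mul 1 0 = 0 := t.one_mul' 0 h01
  have h5 : t.mul x 0 ∈ I01 := t.maps_to x hx 0 h01
  rw [h3, h4] at h2
  rw [h1] at h5 ⊢
  exact le_antisymm h2 h5.1

lemma resid_mem_I01 (t : ContTNorm) {x y : ℝ} (hx : x ∈ I01) (hy : y ∈ I01) :
    resid t x y ∈ I01 := by
  have h01 : (0:ℝ) ∈ I01 := ⟨le_rfl, zero_le_one⟩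
  have h0 : (0:ℝ) ∈ {c | c ∈ I01 ∧ t.mul x c ≤ y} :=
    ⟨h01, by rw [t.mul_zero' hx]; exact hy.1⟩
  have hbdd : BddAbove {c | c ∈ I01 ∧ t.mul x c ≤ y} := ⟨1, fun c hc => hc.1.2⟩
  constructor
  · exact le_csSup hbdd h0
  · exact csSup_le ⟨0, h0⟩ fun c hc => hc.1.2

/-- The full algebra of truth values `[0,1]` for a t-norm `t`. -/
def fullAlg (t : ContTNorm) : TruthAlg t where
  carrier := I01
  subset := le_rfl
  zero_mem := ⟨le_rfl, zero_le_one⟩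
  one_mem := ⟨zero_le_one, le_rfl⟩
  mul_mem := t.maps_to
  resid_mem := fun _ hx _ hy => resid_mem_I01 t hx hy

lemma resid_eq_one_of_le (t : ContTNorm) {x y : ℝ} (hx : x ∈ I01) (hy : y ∈ I01)
    (hxy : x ≤ y) : resid t x y = 1 := by
  have h11 : (1:ℝ) ∈ I01 := ⟨zero_le_one, le_rfl⟩
  have hmul : t.mul x 1 = x := by rw [t.comm x hx 1 h11]; exact t.one_mul' x hx
  have h1 : (1:ℝ) ∈ {c | c ∈ I01 ∧ t.mul x c ≤ y} := ⟨h11, by rw [hmul]; exact hxy⟩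
  have hbdd : BddAbove {c | c ∈ I01 ∧ t.mul x c ≤ y} := ⟨1, fun c hc => hc.1.2⟩
  exact le_antisymm (csSup_le ⟨1, h1⟩ fun c hc => hc.1.2) (le_csSup hbdd h1)

lemma resid_one_zero (t : ContTNorm) : resid t 1 0 = 0 := by
  have : {c | c ∈ I01 ∧ t.mul 1 c ≤ 0} = {0} := by
    ext c
    constructor
    · rintro ⟨hc, hle⟩
      have := t.one_mul' c hc
      have := hc.1
      simp only [Set.mem_singleton_iff]
      linarith [this, (t.one_mul' c hc) ▸ hle]
    · rintro rfl
      exact ⟨⟨le_rfl, zero_le_one⟩, by rw [t.mul_zero' ⟨zero_le_one, le_rfl⟩]⟩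
  rw [resid, this, csSup_singleton]

/-- The two-element algebra of truth values `{0,1}`. -/
def boolAlg (t : ContTNorm) : TruthAlg t where
  carrier := {0, 1}
  subset := by
    rintro x (rfl | rfl)
    · exact ⟨le_rfl, zero_le_one⟩
    · exact ⟨zero_le_one, le_rfl⟩
  zero_mem := Or.inl rfl
  one_mem := Or.inr rfl
  mul_mem := by
    have h01 : (0:ℝ) ∈ I01 := ⟨le_rfl, zero_le_one⟩
    have h11 : (1:ℝ) ∈ I01 := ⟨zero_le_one, le_rfl⟩
    rintro x (rfl | rfl) y (rfl | rfl)
    · exact Or.inl (t.mul_zero' h01)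
    · exact Or.inl (by rw [t.comm 0 h01 1 h11]; exact t.mul_zero' h11)
    · exact Or.inl (t.mul_zero' h11)
    · exact Or.inr (t.one_mul' 1 h11)
  resid_mem := by
    have h01 : (0:ℝ) ∈ I01 := ⟨le_rfl, zero_le_one⟩
    have h11 : (1:ℝ) ∈ I01 := ⟨zero_le_one, le_rfl⟩
    rintro x (rfl | rfl) y (rfl | rfl)
    · exact Or.inr (resid_eq_one_of_le t h01 h01 le_rfl)
    · exact Or.inr (resid_eq_one_of_le t h01 h11 zero_le_one)
    · exact Or.inl (resid_one_zero t)
    · exact Or.inr (resid_eq_one_of_le t h11 h11 le_rfl)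

/-- Classical logic: the logic induced by the two-element algebra `{0,1}`
(this is independent of the chosen continuous t-norm). -/
def ClassicalLogic : Set Formula := Taut minT (boolAlg minT)


namespace Luk

lemma m0 : (0:ℝ) ∈ I01 := ⟨le_rfl, zero_le_one⟩
lemma m1 : (1:ℝ) ∈ I01 := ⟨zero_le_one, le_rfl⟩

variable (t : ContTNorm)

lemma mul_one'' {x : ℝ} (hx : x ∈ I01) : t.mul x 1 = x := by
  rw [t.comm x hx 1 m1]; exact t.one_mul' x hx

lemma mono_left {a b c : ℝ} (ha : a ∈ I01) (hb : b ∈ I01) (hc : c ∈ I01)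
    (h : a ≤ b) : t.mul a c ≤ t.mul b c := by
  rw [t.comm a ha c hc, t.comm b hb c hc]; exact t.mono c hc a ha b hb h

lemma mul_le_right {x y : ℝ} (hx : x ∈ I01) (hy : y ∈ I01) : t.mul x y ≤ y := by
  have := mono_left t hx m1 hy hx.2
  rwa [t.one_mul' y hy] at this

lemma mul_le_left {x y : ℝ} (hx : x ∈ I01) (hy : y ∈ I01) : t.mul x y ≤ x := by
  rw [t.comm x hx y hy]; exact mul_le_right t hy hx

lemma mul_nonneg' {x y : ℝ} (hx : x ∈ I01) (hy : y ∈ I01) : 0 ≤ t.mul x y :=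
  (t.maps_to x hx y hy).1

lemma contOn_slice {x : ℝ} (hx : x ∈ I01) : ContinuousOn (t.mul x) I01 := by
  have h1 : ContinuousOn (fun c : ℝ => ((x, c) : ℝ × ℝ)) I01 :=
    (continuous_const.prodMk continuous_id).continuousOn
  exact t.continuousOn.comp h1 (fun c hc => ⟨hx, hc⟩)

lemma contOn_diag : ContinuousOn (fun s : ℝ => t.mul s s) I01 := by
  have h1 : ContinuousOn (fun s : ℝ => ((s, s) : ℝ × ℝ)) I01 :=
    (continuous_id.prodMk continuous_id).continuousOn
  exact t.continuousOn.comp h1 (fun c hc => ⟨hc, hc⟩)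

open Filter Topology

lemma tendsto_slice {x L : ℝ} (hx : x ∈ I01) (hL : L ∈ I01) {c : ℕ → ℝ}
    (hc : ∀ n, c n ∈ I01) (h : Tendsto c atTop (𝓝 L)) :
    Tendsto (fun n => t.mul x (c n)) atTop (𝓝 (t.mul x L)) :=
  ((contOn_slice t hx) L hL).tendsto.comp
    (tendsto_nhdsWithin_iff.mpr ⟨h, Eventually.of_forall hc⟩)

lemma tendsto_diag {L : ℝ} (hL : L ∈ I01) {c : ℕ → ℝ}
    (hc : ∀ n, c n ∈ I01) (h : Tendsto c atTop (𝓝 L)) :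
    Tendsto (fun n => t.mul (c n) (c n)) atTop (𝓝 (t.mul L L)) :=
  ((contOn_diag t) L hL).tendsto.comp
    (tendsto_nhdsWithin_iff.mpr ⟨h, Eventually.of_forall hc⟩)

/-! ### resid characterization -/

lemma rs_bdd (x y : ℝ) : BddAbove {c | c ∈ I01 ∧ t.mul x c ≤ y} :=
  ⟨1, fun c hc => hc.1.2⟩

lemma rs_nonempty {x y : ℝ} (hx : x ∈ I01) (hy : 0 ≤ y) :
    (0:ℝ) ∈ {c | c ∈ I01 ∧ t.mul x c ≤ y} :=
  ⟨m0, by rw [t.mul_zero' hx]; exact hy⟩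

lemma resid_mem_rs {x y : ℝ} (hx : x ∈ I01) (hy : 0 ≤ y) :
    resid t x y ∈ {c | c ∈ I01 ∧ t.mul x c ≤ y} := by
  have hclosed : IsClosed {c | c ∈ I01 ∧ t.mul x c ≤ y} := by
    have hset : {c | c ∈ I01 ∧ t.mul x c ≤ y} = I01 ∩ (t.mul x) ⁻¹' (Iic y) := by
      ext c
      constructor
      · rintro ⟨h1, h2⟩; exact ⟨h1, h2⟩
      · rintro ⟨h1, h2⟩; exact ⟨h1, h2⟩
    rw [hset]
    exact (contOn_slice t hx).preimage_isClosed_of_isClosed (by unfold I01; exact isClosed_Icc)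
      isClosed_Iic
  have hcomp : IsCompact {c | c ∈ I01 ∧ t.mul x c ≤ y} :=
    IsCompact.of_isClosed_subset isCompact_Icc hclosed (fun c hc => hc.1)
  exact hcomp.sSup_mem ⟨0, rs_nonempty t hx hy⟩

lemma resid_mem01 {x y : ℝ} (hx : x ∈ I01) (hy : 0 ≤ y) : resid t x y ∈ I01 :=
  (resid_mem_rs t hx hy).1

lemma mul_resid_le {x y : ℝ} (hx : x ∈ I01) (hy : 0 ≤ y) : t.mul x (resid t x y) ≤ y :=
  (resid_mem_rs t hx hy).2

lemma le_resid_iff {x y c : ℝ} (hx : x ∈ I01) (hy : 0 ≤ y) (hc : c ∈ I01) :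
    c ≤ resid t x y ↔ t.mul x c ≤ y := by
  constructor
  · intro h
    exact le_trans (t.mono x hx c hc (resid t x y) (resid_mem01 t hx hy) h)
      (mul_resid_le t hx hy)
  · intro h
    exact le_csSup (rs_bdd t x y) ⟨hc, h⟩

lemma resid_ge_snd {x y : ℝ} (hx : x ∈ I01) (hy : y ∈ I01) : y ≤ resid t x y :=
  (le_resid_iff t hx hy.1 hy).mpr (mul_le_right t hx hy)

lemma resid_zero_left {y : ℝ} (hy : 0 ≤ y) : resid t 0 y = 1 := by
  have h := resid_mem01 t m0 hy
  have : (1:ℝ) ≤ resid t 0 y := (le_resid_iff t m0 hy m1).mpr (by rw [t.comm 0 m0 1 m1, t.mul_zero' m1]; exact hy)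
  linarith [h.2]

/-! ### Separation property from P2 -/

def Sep (t : ContTNorm) (T : TruthAlg t) : Prop :=
  ∀ v w : ℕ → ℝ, IsValuation t T v → IsValuation t T w → v ≠ w →
    ∃ α : Formula, 0 < eval t v α ∧ eval t w α = 0

lemma sep_of_P2 {t : ContTNorm} {T : TruthAlg t} (h : P2 (Taut t T)) : Sep t T :=
  h t T rfl

/-- robustly positive elements -/
def Rob (t : ContTNorm) (u : ℝ) : Prop := ∀ c, 0 < c → c ≤ 1 → 0 < t.mul u c

lemma nil_of_sep {t : ContTNorm} {T : TruthAlg t} (hsep : Sep t T) {x : ℝ}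
    (hx : x ∈ T.carrier) (h0 : 0 < x) (h1 : x < 1) :
    ∃ c, 0 < c ∧ c ≤ 1 ∧ t.mul x c = 0 := by
  by_contra hcon
  push_neg at hcon
  have hxI : x ∈ I01 := T.subset hx
  have hrobx : Rob t x := by
    intro c hc hc1
    exact lt_of_le_of_ne (mul_nonneg' t hxI ⟨le_of_lt hc, hc1⟩)
      (Ne.symm (hcon c hc hc1))
  set Q : ℝ → Prop := fun u => u ∈ T.carrier ∧ (u = 0 ∨ (0 < u ∧ Rob t u)) with hQdef
  have hQ0 : Q 0 := ⟨T.zero_mem, Or.inl rfl⟩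
  have hQ1 : Q 1 := by
    refine ⟨T.one_mem, Or.inr ⟨one_pos, fun c hc hc1 => ?_⟩⟩
    rw [t.one_mul' c ⟨le_of_lt hc, hc1⟩]; exact hc
  have hQx : Q x := ⟨hx, Or.inr ⟨h0, hrobx⟩⟩
  have hQmul : ∀ u u', Q u → Q u' →
      Q (t.mul u u') ∧ (t.mul u u' = 0 ↔ (u = 0 ∨ u' = 0)) := by
    rintro u u' ⟨hu, hu2⟩ ⟨hu', hu'2⟩
    have huI : u ∈ I01 := T.subset hu
    have hu'I : u' ∈ I01 := T.subset hu'
    have hmem : t.mul u u' ∈ T.carrier := T.mul_mem u hu u' hu'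
    rcases hu2 with rfl | ⟨hupos, hurob⟩
    · rw [t.comm 0 m0 u' hu'I, t.mul_zero' hu'I]
      exact ⟨hQ0, by simp⟩
    rcases hu'2 with rfl | ⟨hu'pos, hu'rob⟩
    · rw [t.mul_zero' huI]
      exact ⟨hQ0, by simp⟩
    have hpos : 0 < t.mul u u' := hurob u' hu'pos hu'I.2
    refine ⟨⟨hmem, Or.inr ⟨hpos, fun c hc hc1 => ?_⟩⟩, ?_⟩
    · rw [t.assoc u huI u' hu'I c ⟨le_of_lt hc, hc1⟩]
      have h1 : 0 < t.mul u' c := hu'rob c hc hc1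
      have h2 : t.mul u' c ∈ I01 := t.maps_to u' hu'I c ⟨le_of_lt hc, hc1⟩
      exact hurob _ h1 h2.2
    · constructor
      · intro h; exact absurd h (ne_of_gt hpos)
      · rintro (rfl | rfl)
        · exact absurd rfl (ne_of_gt hupos)
        · exact absurd rfl (ne_of_gt hu'pos)
  have hQresid : ∀ u u', Q u → Q u' →
      Q (resid t u u') ∧ (resid t u u' = 0 ↔ (u ≠ 0 ∧ u' = 0)) := by
    rintro u u' ⟨hu, hu2⟩ ⟨hu', hu'2⟩
    have huI : u ∈ I01 := T.subset hu
    have hu'I : u' ∈ I01 := T.subset hu'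
    have hmem : resid t u u' ∈ T.carrier := T.resid_mem u hu u' hu'
    rcases hu2 with rfl | ⟨hupos, hurob⟩
    · rw [resid_zero_left t hu'I.1]
      exact ⟨hQ1, by simp⟩
    rcases hu'2 with rfl | ⟨hu'pos, hu'rob⟩
    · have hz : resid t u 0 = 0 := by
        have h := resid_mem_rs t huI le_rfl
        have h2 : t.mul u (resid t u 0) ≤ 0 := h.2
        by_contra hne
        have hgt : 0 < resid t u 0 := lt_of_le_of_ne h.1.1 (Ne.symm hne)
        exact absurd h2 (not_le.mpr (hurob _ hgt h.1.2))
      rw [hz]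
      exact ⟨hQ0, by simp [ne_of_gt hupos]⟩
    · have hge : u' ≤ resid t u u' := resid_ge_snd t huI hu'I
      have hrI : resid t u u' ∈ I01 := resid_mem01 t huI hu'I.1
      have hrpos : 0 < resid t u u' := lt_of_lt_of_le hu'pos hge
      refine ⟨⟨hmem, Or.inr ⟨hrpos, fun c hc hc1 => ?_⟩⟩, ?_⟩
      · have h1 : 0 < t.mul u' c := hu'rob c hc hc1
        have := mono_left t hu'I hrI ⟨le_of_lt hc, hc1⟩ hge
        exact lt_of_lt_of_le h1 this
      · simp [ne_of_gt hrpos, ne_of_gt hu'pos]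
  have main : ∀ α : Formula,
      Q (eval t (fun _ => x) α) ∧ Q (eval t (fun _ => (1:ℝ)) α) ∧
        (eval t (fun _ => x) α = 0 ↔ eval t (fun _ => (1:ℝ)) α = 0) := by
    intro α
    induction α with
    | var i =>
        refine ⟨hQx, hQ1, ?_⟩
        constructor
        · intro h; exact absurd h (ne_of_gt h0)
        · intro h; exact absurd h one_ne_zero
    | bot => exact ⟨hQ0, hQ0, Iff.rfl⟩
    | conj a b iha ihb =>
        obtain ⟨ha1, ha2, ha3⟩ := iha
        obtain ⟨hb1, hb2, hb3⟩ := ihb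
        obtain ⟨hm1, hm1'⟩ := hQmul _ _ ha1 hb1
        obtain ⟨hm2, hm2'⟩ := hQmul _ _ ha2 hb2
        refine ⟨hm1, hm2, ?_⟩
        show t.mul (eval t (fun _ => x) a) (eval t (fun _ => x) b) = 0 ↔
          t.mul (eval t (fun _ => (1:ℝ)) a) (eval t (fun _ => (1:ℝ)) b) = 0
        rw [hm1', hm2']
        exact or_congr ha3 hb3
    | impl a b iha ihb =>
        obtain ⟨ha1, ha2, ha3⟩ := iha
        obtain ⟨hb1, hb2, hb3⟩ := ihb
        obtain ⟨hm1, hm1'⟩ := hQresid _ _ ha1 hb1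
        obtain ⟨hm2, hm2'⟩ := hQresid _ _ ha2 hb2
        refine ⟨hm1, hm2, ?_⟩
        show resid t (eval t (fun _ => x) a) (eval t (fun _ => x) b) = 0 ↔
          resid t (eval t (fun _ => (1:ℝ)) a) (eval t (fun _ => (1:ℝ)) b) = 0
        rw [hm1', hm2']
        exact and_congr (not_congr ha3) hb3
  have hv : IsValuation t T (fun _ => x) := fun _ => hx
  have hw : IsValuation t T (fun _ => (1:ℝ)) := fun _ => T.one_mem
  have hne : (fun _ => x : ℕ → ℝ) ≠ (fun _ => (1:ℝ)) := by
    intro h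
    exact absurd (congrFun h 0) (ne_of_lt h1)
  obtain ⟨α, hpos, hzero⟩ := hsep _ _ hv hw hne
  have := (main α).2.2.mpr hzero
  rw [this] at hpos
  exact lt_irrefl _ hpos


/-! ### Structure of the first component -/

section Structure

variable (t : ContTNorm)

/-- elements with a zero divisor -/
def Nil : Set ℝ := {x | x ∈ I01 ∧ 0 < x ∧ ∃ c, c ∈ I01 ∧ 0 < c ∧ t.mul x c = 0}

/-- top of the first (nilpotent) component -/
def beta : ℝ := sSup (Nil t)

variable {t}

lemma nil_bdd : BddAbove (Nil t) := ⟨1, fun x hx => hx.1.2⟩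

variable (hN : (Nil t).Nonempty)

include hN

lemma beta_pos : 0 < beta t := by
  obtain ⟨x, hx⟩ := hN
  exact lt_of_lt_of_le hx.2.1 (le_csSup nil_bdd hx)

lemma beta_le_one : beta t ≤ 1 :=
  csSup_le hN (fun x hx => hx.1.2)

lemma beta_mem01 : beta t ∈ I01 := ⟨le_of_lt (beta_pos hN), beta_le_one hN⟩

omit hN in
lemma le_beta_of_nil {x : ℝ} (hx : x ∈ Nil t) : x ≤ beta t := le_csSup nil_bdd hx

omit hN in
lemma nil_dcl {x z : ℝ} (hz : z ∈ Nil t) (hx0 : 0 < x) (hx : x ≤ z) : x ∈ Nil t := by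
  obtain ⟨hzI, hz0, c, hcI, hc0, hc⟩ := hz
  have hxI : x ∈ I01 := ⟨le_of_lt hx0, le_trans hx hzI.2⟩
  refine ⟨hxI, hx0, c, hcI, hc0, ?_⟩
  have h1 : t.mul x c ≤ t.mul z c := mono_left t hxI hzI hcI hx
  have h2 : 0 ≤ t.mul x c := mul_nonneg' t hxI hcI
  rw [hc] at h1
  linarith

lemma mem_nil_of_lt_beta {x : ℝ} (hx0 : 0 < x) (hx : x < beta t) : x ∈ Nil t := by
  obtain ⟨z, hz, hxz⟩ := exists_lt_of_lt_csSup hN hx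
  exact nil_dcl hz hx0 (le_of_lt hxz)

omit hN in
lemma idem_min {e : ℝ} (he : e ∈ I01) (hee : t.mul e e = e) {c : ℝ} (hc : c ∈ I01) :
    t.mul e c = min e c := by
  rcases le_total e c with h | h
  · rw [min_eq_left h]
    have h1 : t.mul e c ≤ e := mul_le_left t he hc
    have h2 : t.mul e e ≤ t.mul e c := t.mono e he e he c hc h
    rw [hee] at h2
    linarith
  · rw [min_eq_right h]
    -- IVT
    have hcont : ContinuousOn (t.mul e) (Icc 0 e) := by
      apply (contOn_slice t he).mono
      intro z hz
      exact ⟨hz.1, le_trans hz.2 he.2⟩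
    have hIcc : Icc (t.mul e 0) (t.mul e e) ⊆ (t.mul e) '' (Icc 0 e) :=
      intermediate_value_Icc he.1 hcont
    rw [t.mul_zero' he, hee] at hIcc
    obtain ⟨d, hd, hde⟩ := hIcc ⟨hc.1, h⟩
    have hdI : d ∈ I01 := ⟨hd.1, le_trans hd.2 he.2⟩
    calc t.mul e c = t.mul e (t.mul e d) := by rw [hde]
    _ = t.mul (t.mul e e) d := (t.assoc e he e he d hdI).symm
    _ = t.mul e d := by rw [hee]
    _ = c := hde

lemma beta_idem : t.mul (beta t) (beta t) = beta t := by
  by_contra hne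
  have hbI : beta t ∈ I01 := beta_mem01 hN
  have hlt : t.mul (beta t) (beta t) < beta t :=
    lt_of_le_of_ne (mul_le_left t hbI hbI) hne
  have hb1 : beta t < 1 := by
    rcases lt_or_eq_of_le (beta_le_one hN) with h | h
    · exact h
    · exfalso; rw [h] at hlt; rw [t.one_mul' 1 m1] at hlt; linarith
  obtain ⟨z, hzI, hzgt, hn⟩ : ∃ z ∈ I01, beta t < z ∧ t.mul z z < beta t := by
    set b := beta t with hbdef
    have hcont : ContinuousOn (fun s : ℝ => t.mul s s) I01 := contOn_diag t
    have hztend : Filter.Tendsto (fun n : ℕ => b + (1 - b) / (n + 1))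
        Filter.atTop (nhds b) := by
      have h1 : Filter.Tendsto (fun n : ℕ => 1 / ((n:ℝ) + 1)) Filter.atTop (nhds 0) :=
        tendsto_one_div_add_atTop_nhds_zero_nat
      have h2 := (h1.const_mul (1 - b)).const_add b
      simp only [mul_zero, add_zero] at h2
      convert h2 using 2 with n
      ring
    have hzmem : ∀ n : ℕ, b + (1 - b) / (n + 1) ∈ I01 := by
      intro n
      have h1 : (0:ℝ) < 1 / ((n:ℝ) + 1) := by positivity
      have h2 : 1 / ((n:ℝ) + 1) ≤ 1 := by
        have hpos : (0:ℝ) < (n:ℝ) + 1 := by positivity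
        rw [div_le_one hpos]; linarith [(Nat.cast_nonneg n : (0:ℝ) ≤ (n:ℝ))]
      have hb0 : 0 < b := beta_pos hN
      constructor
      · have : (1 - b) / ((n:ℝ) + 1) = (1 - b) * (1 / ((n:ℝ)+1)) := by ring
        rw [this]; nlinarith
      · have : (1 - b) / ((n:ℝ) + 1) = (1 - b) * (1 / ((n:ℝ)+1)) := by ring
        rw [this]; nlinarith
    have hgt : Filter.Tendsto (fun n : ℕ => t.mul (b + (1-b)/(n+1)) (b + (1-b)/(n+1)))
        Filter.atTop (nhds (t.mul b b)) :=
      tendsto_diag t hbI hzmem hztend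
    have hev := hgt.eventually_lt_const hlt
    obtain ⟨n, hn⟩ := hev.exists
    refine ⟨b + (1-b)/(n+1), hzmem n, ?_, hn⟩
    have h1 : (0:ℝ) < 1 / ((n:ℝ) + 1) := by positivity
    have : (1 - b) / ((n:ℝ) + 1) = (1 - b) * (1 / ((n:ℝ)+1)) := by ring
    rw [this]
    nlinarith
  have hznil : z ∈ Nil t := by
    have hz0 : 0 < z := lt_trans (beta_pos hN) hzgt
    rcases eq_or_lt_of_le (mul_nonneg' t hzI hzI) with h | h
    · exact ⟨hzI, hz0, z, hzI, hz0, h.symm⟩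
    · have hzz : t.mul z z ∈ Nil t := mem_nil_of_lt_beta hN h hn
      obtain ⟨_, _, c, hcI, hc0, hc⟩ := hzz
      have hassoc : t.mul z (t.mul z c) = 0 := by
        rw [← t.assoc z hzI z hzI c hcI]; exact hc
      rcases eq_or_lt_of_le (mul_nonneg' t hzI hcI) with h2 | h2
      · exact ⟨hzI, hz0, c, hcI, hc0, h2.symm⟩
      · exact ⟨hzI, hz0, t.mul z c, t.maps_to z hzI c hcI, h2, hassoc⟩
  exact absurd (le_beta_of_nil hznil) (not_le.mpr hzgt)

lemma beta_min {c : ℝ} (hc : c ∈ I01) : t.mul (beta t) c = min (beta t) c :=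
  idem_min (beta_mem01 hN) (beta_idem hN) hc

lemma beta_not_nil : beta t ∉ Nil t := by
  rintro ⟨hbI, hb0, c, hcI, hc0, hc⟩
  rw [beta_min hN hcI] at hc
  rcases le_total (beta t) c with h | h
  · rw [min_eq_left h] at hc; linarith
  · rw [min_eq_right h] at hc; linarith

lemma no_interior_idem {e : ℝ} (he : e ∈ I01) (h0 : 0 < e) (hlt : e < beta t) :
    t.mul e e ≠ e := by
  intro hee
  have := mem_nil_of_lt_beta hN h0 hlt
  obtain ⟨_, _, c, hcI, hc0, hc⟩ := this
  rw [idem_min he hee hcI] at hc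
  rcases le_total e c with h | h
  · rw [min_eq_left h] at hc; linarith
  · rw [min_eq_right h] at hc; linarith

lemma Icc_beta_sub : Icc (0:ℝ) (beta t) ⊆ I01 := fun x hx =>
  ⟨hx.1, le_trans hx.2 (beta_le_one hN)⟩

lemma mul_beta_right {x : ℝ} (hx : x ∈ Icc 0 (beta t)) : t.mul x (beta t) = x := by
  have hxI : x ∈ I01 := Icc_beta_sub hN hx
  rw [t.comm x hxI (beta t) (beta_mem01 hN), beta_min hN hxI, min_eq_right hx.2]

lemma mul_high {x c : ℝ} (hx : x ∈ Icc 0 (beta t)) (hc : c ∈ I01) (hbc : beta t ≤ c) :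
    t.mul x c = x := by
  have hxI : x ∈ I01 := Icc_beta_sub hN hx
  have h1 : t.mul x (beta t) ≤ t.mul x c := t.mono x hxI (beta t) (beta_mem01 hN) c hc hbc
  have h2 : t.mul x c ≤ t.mul x 1 := t.mono x hxI c hc 1 m1 hc.2
  rw [mul_beta_right hN hx] at h1
  rw [mul_one'' t hxI] at h2
  linarith

lemma mul_mem_Icc_beta {x y : ℝ} (hx : x ∈ Icc 0 (beta t)) (hy : y ∈ Icc 0 (beta t)) :
    t.mul x y ∈ Icc 0 (beta t) := by
  have hxI : x ∈ I01 := Icc_beta_sub hN hx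
  have hyI : y ∈ I01 := Icc_beta_sub hN hy
  exact ⟨mul_nonneg' t hxI hyI, le_trans (mul_le_left t hxI hyI) hx.2⟩

end Structure

/-! ### Powers -/

variable {t : ContTNorm}

def pw (t : ContTNorm) (x : ℝ) : ℕ → ℝ
  | 0 => beta t
  | n+1 => t.mul x (pw t x n)

section Pw

variable (hN : (Nil t).Nonempty)

include hN

lemma pw_mem {x : ℝ} (hx : x ∈ Icc 0 (beta t)) : ∀ n, pw t x n ∈ Icc 0 (beta t) := by
  intro n
  induction n with
  | zero => exact ⟨le_of_lt (beta_pos hN), le_rfl⟩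
  | succ n ih => exact mul_mem_Icc_beta hN hx ih

lemma pw_one {x : ℝ} (hx : x ∈ Icc 0 (beta t)) : pw t x 1 = x := by
  show t.mul x (beta t) = x
  exact mul_beta_right hN hx

lemma pw_add {x : ℝ} (hx : x ∈ Icc 0 (beta t)) (m n : ℕ) :
    pw t x (m + n) = t.mul (pw t x m) (pw t x n) := by
  induction n with
  | zero => rw [Nat.add_zero]; exact (mul_beta_right hN (pw_mem hN hx m)).symm
  | succ n ih =>
      have hxI : x ∈ I01 := Icc_beta_sub hN hx
      have hmI : pw t x m ∈ I01 := Icc_beta_sub hN (pw_mem hN hx m)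
      have hnI : pw t x n ∈ I01 := Icc_beta_sub hN (pw_mem hN hx n)
      show t.mul x (pw t x (m + n)) = t.mul (pw t x m) (t.mul x (pw t x n))
      rw [ih, ← t.assoc x hxI (pw t x m) hmI (pw t x n) hnI,
        t.comm x hxI (pw t x m) hmI, t.assoc (pw t x m) hmI x hxI (pw t x n) hnI]

lemma pw_succ_le {x : ℝ} (hx : x ∈ Icc 0 (beta t)) (n : ℕ) :
    pw t x (n+1) ≤ pw t x n :=
  mul_le_right t (Icc_beta_sub hN hx) (Icc_beta_sub hN (pw_mem hN hx n))

lemma pw_antitone {x : ℝ} (hx : x ∈ Icc 0 (beta t)) : Antitone (pw t x) :=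
  antitone_nat_of_succ_le (pw_succ_le hN hx)

lemma pw_mono_x {x y : ℝ} (hx : x ∈ Icc 0 (beta t)) (hy : y ∈ Icc 0 (beta t))
    (hxy : x ≤ y) (n : ℕ) : pw t x n ≤ pw t y n := by
  induction n with
  | zero => exact le_rfl
  | succ n ih =>
      have h1 : t.mul x (pw t x n) ≤ t.mul y (pw t x n) :=
        mono_left t (Icc_beta_sub hN hx) (Icc_beta_sub hN hy)
          (Icc_beta_sub hN (pw_mem hN hx n)) hxy
      have h2 : t.mul y (pw t x n) ≤ t.mul y (pw t y n) :=
        t.mono y (Icc_beta_sub hN hy) (pw t x n) (Icc_beta_sub hN (pw_mem hN hx n))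
          (pw t y n) (Icc_beta_sub hN (pw_mem hN hy n)) ih
      exact le_trans h1 h2

lemma pw_sq {x : ℝ} (hx : x ∈ Icc 0 (beta t)) (n : ℕ) :
    pw t x (2 * n) = pw t (t.mul x x) n := by
  induction n with
  | zero => rfl
  | succ n ih =>
      have h1 : 2 * (n + 1) = 2 + 2 * n := by ring
      have h2 : pw t x 2 = t.mul x x := by
        show t.mul x (pw t x 1) = t.mul x x
        rw [pw_one hN hx]
      rw [h1, pw_add hN hx 2 (2*n), ih, h2]
      rfl

open Filter Topology

lemma pw_tendsto_zero {x : ℝ} (hx : x ∈ Icc 0 (beta t)) (hlt : x < beta t) :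
    Tendsto (pw t x) atTop (𝓝 0) := by
  have hbdd : BddBelow (range (pw t x)) := ⟨0, by rintro y ⟨n, rfl⟩; exact (pw_mem hN hx n).1⟩
  set L := ⨅ n, pw t x n with hL
  have hlim : Tendsto (pw t x) atTop (𝓝 L) := tendsto_atTop_ciInf (pw_antitone hN hx) hbdd
  have hL0 : 0 ≤ L := le_ciInf (fun n => (pw_mem hN hx n).1)
  have hLx : L ≤ x := by
    have := ciInf_le hbdd 1
    rwa [pw_one hN hx] at this
  have hLI : L ∈ I01 := ⟨hL0, le_trans hLx (Icc_beta_sub hN hx).2⟩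
  -- t.mul L L = L via subsequence
  have h2n : Tendsto (fun n => 2 * n) atTop atTop :=
    tendsto_atTop_atTop_of_monotone (fun a b h => by omega) (fun b => ⟨b, by omega⟩)
  have hsub : Tendsto (fun n => pw t x (2 * n)) atTop (𝓝 L) := hlim.comp h2n
  have heq : (fun n => pw t x (2 * n)) = fun n => t.mul (pw t x n) (pw t x n) := by
    funext n
    have : 2 * n = n + n := by ring
    rw [this, pw_add hN hx n n]
  rw [heq] at hsub
  have hjoint : Tendsto (fun n => t.mul (pw t x n) (pw t x n)) atTop (𝓝 (t.mul L L)) :=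
    tendsto_diag t hLI (fun n => Icc_beta_sub hN (pw_mem hN hx n)) hlim
  have hid : t.mul L L = L := tendsto_nhds_unique hjoint hsub
  rcases eq_or_lt_of_le hL0 with h | h
  · rwa [← h] at hlim
  · exact absurd hid (no_interior_idem hN hLI h (lt_of_le_of_lt hLx hlt))

lemma cancel {x c c' : ℝ} (hx : x ∈ Icc 0 (beta t)) (hc : c ∈ Icc 0 (beta t))
    (hc' : c' ∈ Icc 0 (beta t)) (heq : t.mul x c = t.mul x c')
    (hpos : 0 < t.mul x c) : c = c' := by
  -- wlog c < c'
  have main : ∀ c c' : ℝ, c ∈ Icc 0 (beta t) → c' ∈ Icc 0 (beta t) →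
      t.mul x c = t.mul x c' → 0 < t.mul x c → c < c' → False := by
    clear heq hpos hc hc' c c'
    intro c c' hc hc' heq hpos hlt
    have hxI : x ∈ I01 := Icc_beta_sub hN hx
    have hcI : c ∈ I01 := Icc_beta_sub hN hc
    have hc'I : c' ∈ I01 := Icc_beta_sub hN hc'
    -- IVT : find d with t.mul c' d = c
    have hcont : ContinuousOn (t.mul c') (Icc 0 (beta t)) :=
      (contOn_slice t hc'I).mono (Icc_beta_sub hN)
    have hIcc : Icc (t.mul c' 0) (t.mul c' (beta t)) ⊆ (t.mul c') '' (Icc 0 (beta t)) :=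
      intermediate_value_Icc (le_of_lt (beta_pos hN)) hcont
    rw [t.mul_zero' hc'I, mul_beta_right hN hc'] at hIcc
    obtain ⟨d, hd, hdc⟩ := hIcc ⟨hc.1, le_of_lt hlt⟩
    have hdI : d ∈ I01 := Icc_beta_sub hN hd
    have hdb : d ≠ beta t := by
      intro h; rw [h, mul_beta_right hN hc'] at hdc; exact absurd hdc (ne_of_gt hlt)
    have hdlt : d < beta t := lt_of_le_of_ne hd.2 hdb
    set p := t.mul x c with hp
    have hppos : 0 < p := hpos
    have hpI : p ∈ Icc 0 (beta t) := by
      constructor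
      · exact mul_nonneg' t hxI hcI
      · exact le_trans (mul_le_right t hxI hcI) hc.2
    have hpd : p = t.mul p d := by
      have e1 : t.mul x (t.mul c' d) = t.mul (t.mul x c') d :=
        (t.assoc x hxI c' hc'I d hdI).symm
      rw [hdc] at e1
      rw [← heq] at e1
      exact e1
    have hpn : ∀ n, p = t.mul p (pw t d n) := by
      intro n
      induction n with
      | zero => exact (mul_beta_right hN hpI).symm
      | succ n ih =>
          have hpwI : pw t d n ∈ I01 := Icc_beta_sub hN (pw_mem hN hd n)
          have e1 : t.mul (t.mul p d) (pw t d n) = t.mul p (t.mul d (pw t d n)) :=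
            t.assoc p (Icc_beta_sub hN hpI) d hdI (pw t d n) hpwI
          rw [← hpd] at e1
          show p = t.mul p (t.mul d (pw t d n))
          rw [← e1]
          exact ih
    have htend : Tendsto (fun n => t.mul p (pw t d n)) atTop (𝓝 (t.mul p 0)) :=
      tendsto_slice t (Icc_beta_sub hN hpI) m0
        (fun n => Icc_beta_sub hN (pw_mem hN hd n)) (pw_tendsto_zero hN hd hdlt)
    rw [t.mul_zero' (Icc_beta_sub hN hpI)] at htend
    have hconst : Tendsto (fun n => t.mul p (pw t d n)) atTop (𝓝 p) := by
      have : (fun n => t.mul p (pw t d n)) = fun _ => p := by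
        funext n; exact (hpn n).symm
      rw [this]; exact tendsto_const_nhds
    have := tendsto_nhds_unique htend hconst
    linarith
  rcases lt_trichotomy c c' with h | h | h
  · exact absurd (main c c' hc hc' heq hpos h) not_false
  · exact h
  · exact absurd (main c' c hc' hc heq.symm (heq ▸ hpos) h) not_false

end Pw


/-! ### The annihilator (negation) -/

def nn (t : ContTNorm) (x : ℝ) : ℝ := sSup {c | c ∈ Icc 0 (beta t) ∧ t.mul x c = 0}

section Nn

variable (hN : (Nil t).Nonempty)

include hN

lemma nn_mem_set {x : ℝ} (hx : x ∈ Icc 0 (beta t)) :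
    nn t x ∈ {c | c ∈ Icc 0 (beta t) ∧ t.mul x c = 0} := by
  have hxI : x ∈ I01 := Icc_beta_sub hN hx
  have hset : {c | c ∈ Icc 0 (beta t) ∧ t.mul x c = 0}
      = Icc 0 (beta t) ∩ (t.mul x) ⁻¹' {0} := by
    ext c
    constructor
    · rintro ⟨h1, h2⟩; exact ⟨h1, h2⟩
    · rintro ⟨h1, h2⟩; exact ⟨h1, h2⟩
  have hclosed : IsClosed {c | c ∈ Icc 0 (beta t) ∧ t.mul x c = 0} := by
    rw [hset]
    exact ((contOn_slice t hxI).mono (Icc_beta_sub hN)).preimage_isClosed_of_isClosed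
      isClosed_Icc isClosed_singleton
  have hcomp : IsCompact {c | c ∈ Icc 0 (beta t) ∧ t.mul x c = 0} :=
    IsCompact.of_isClosed_subset isCompact_Icc hclosed (fun c hc => hc.1)
  have hne : (0:ℝ) ∈ {c | c ∈ Icc 0 (beta t) ∧ t.mul x c = 0} :=
    ⟨⟨le_rfl, le_of_lt (beta_pos hN)⟩, t.mul_zero' hxI⟩
  exact hcomp.sSup_mem ⟨0, hne⟩

lemma nn_mem {x : ℝ} (hx : x ∈ Icc 0 (beta t)) : nn t x ∈ Icc 0 (beta t) :=
  (nn_mem_set hN hx).1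

lemma mul_nn {x : ℝ} (hx : x ∈ Icc 0 (beta t)) : t.mul x (nn t x) = 0 :=
  (nn_mem_set hN hx).2

lemma le_nn_iff {x c : ℝ} (hx : x ∈ Icc 0 (beta t)) (hc : c ∈ Icc 0 (beta t)) :
    c ≤ nn t x ↔ t.mul x c = 0 := by
  constructor
  · intro h
    have h1 : t.mul x c ≤ t.mul x (nn t x) :=
      t.mono x (Icc_beta_sub hN hx) c (Icc_beta_sub hN hc)
        (nn t x) (Icc_beta_sub hN (nn_mem hN hx)) h
    rw [mul_nn hN hx] at h1
    have h2 : 0 ≤ t.mul x c := mul_nonneg' t (Icc_beta_sub hN hx) (Icc_beta_sub hN hc)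
    linarith
  · intro h
    exact le_csSup ⟨beta t, fun d hd => hd.1.2⟩ ⟨hc, h⟩

lemma nn_anti {x y : ℝ} (hx : x ∈ Icc 0 (beta t)) (hy : y ∈ Icc 0 (beta t))
    (hxy : x ≤ y) : nn t y ≤ nn t x := by
  rw [le_nn_iff hN hx (nn_mem hN hy)]
  have h1 : t.mul x (nn t y) ≤ t.mul y (nn t y) :=
    mono_left t (Icc_beta_sub hN hx) (Icc_beta_sub hN hy)
      (Icc_beta_sub hN (nn_mem hN hy)) hxy
  rw [mul_nn hN hy] at h1
  have h2 : 0 ≤ t.mul x (nn t y) :=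
    mul_nonneg' t (Icc_beta_sub hN hx) (Icc_beta_sub hN (nn_mem hN hy))
  linarith

lemma nn_zero : nn t 0 = beta t := by
  have h1 : nn t 0 ≤ beta t := (nn_mem hN ⟨le_rfl, le_of_lt (beta_pos hN)⟩).2
  have h2 : beta t ≤ nn t 0 := by
    rw [le_nn_iff hN ⟨le_rfl, le_of_lt (beta_pos hN)⟩ ⟨le_of_lt (beta_pos hN), le_rfl⟩]
    rw [t.comm 0 m0 (beta t) (beta_mem01 hN), t.mul_zero' (beta_mem01 hN)]
  linarith

lemma nn_beta : nn t (beta t) = 0 := by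
  have hb : beta t ∈ Icc 0 (beta t) := ⟨le_of_lt (beta_pos hN), le_rfl⟩
  have h1 := mul_nn hN hb
  rw [beta_min hN (Icc_beta_sub hN (nn_mem hN hb)),
    min_eq_right (nn_mem hN hb).2] at h1
  exact h1

lemma nn_pos {x : ℝ} (hx : x ∈ Icc 0 (beta t)) (hlt : x < beta t) : 0 < nn t x := by
  rcases eq_or_lt_of_le hx.1 with h | h
  · rw [← h, nn_zero hN]; exact beta_pos hN
  · obtain ⟨hxI, hx0, c, hcI, hc0, hc⟩ := mem_nil_of_lt_beta hN h hlt
    have hcb : c ≤ beta t := by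
      by_contra hcon
      push_neg at hcon
      rw [mul_high hN hx hcI (le_of_lt hcon)] at hc
      exact absurd hc (ne_of_gt h)
    have := (le_nn_iff hN hx ⟨hcI.1, hcb⟩).mpr hc
    linarith

lemma nn_lt_beta {x : ℝ} (hx : x ∈ Icc 0 (beta t)) (h0 : 0 < x) : nn t x < beta t := by
  rcases eq_or_lt_of_le (nn_mem hN hx).2 with h | h
  · exfalso
    have h1 := mul_nn hN hx
    rw [h, mul_beta_right hN hx] at h1
    exact absurd h1 (ne_of_gt h0)
  · exact h

lemma nn_invol {x : ℝ} (hx : x ∈ Icc 0 (beta t)) : nn t (nn t x) = x := by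
  rcases eq_or_lt_of_le hx.1 with h0 | h0
  · rw [← h0, nn_zero hN, nn_beta hN]
  rcases eq_or_lt_of_le hx.2 with hb | hb
  · rw [hb, nn_beta hN, nn_zero hN]
  -- 0 < x < beta
  have hnx : nn t x ∈ Icc 0 (beta t) := nn_mem hN hx
  have hz : x ≤ nn t (nn t x) := by
    rw [le_nn_iff hN hnx hx, t.comm (nn t x) (Icc_beta_sub hN hnx) x (Icc_beta_sub hN hx)]
    exact mul_nn hN hx
  rcases eq_or_lt_of_le hz with h | h
  · exact h.symm
  exfalso
  set z := nn t (nn t x) with hzdef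
  have hzm : z ∈ Icc 0 (beta t) := nn_mem hN hnx
  have hzI : z ∈ I01 := Icc_beta_sub hN hzm
  -- IVT: c with t.mul z c = x
  have hcont : ContinuousOn (t.mul z) (Icc 0 (beta t)) :=
    (contOn_slice t hzI).mono (Icc_beta_sub hN)
  have hIcc : Icc (t.mul z 0) (t.mul z (beta t)) ⊆ (t.mul z) '' (Icc 0 (beta t)) :=
    intermediate_value_Icc (le_of_lt (beta_pos hN)) hcont
  rw [t.mul_zero' hzI, mul_beta_right hN hzm] at hIcc
  obtain ⟨c, hc, hcz⟩ := hIcc ⟨hx.1, le_of_lt h⟩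
  have hcI : c ∈ I01 := Icc_beta_sub hN hc
  have hcb : c < beta t := by
    rcases eq_or_lt_of_le hc.2 with hh | hh
    · exfalso; rw [hh, mul_beta_right hN hzm] at hcz; rw [hcz] at h; exact lt_irrefl _ h
    · exact hh
  have hnzx : nn t z = nn t x := by
    have hle : nn t z ≤ nn t x := nn_anti hN hx hzm (le_of_lt h)
    have hge : nn t x ≤ nn t z := by
      rw [le_nn_iff hN hzm hnx, t.comm z hzI (nn t x) (Icc_beta_sub hN hnx)]
      exact mul_nn hN hnx
    linarith
  have claim : ∀ d, d ∈ Icc 0 (beta t) → nn t x < d → nn t x < t.mul c d := by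
    intro d hd hdgt
    by_contra hcon
    push_neg at hcon
    have hcd : t.mul c d ∈ Icc 0 (beta t) := mul_mem_Icc_beta hN hc hd
    have h1 : t.mul z (t.mul c d) = 0 := by
      have h2 : t.mul c d ≤ nn t z := by rw [hnzx]; exact hcon
      have h3 := (le_nn_iff hN hzm hcd).mp h2
      exact h3
    rw [← t.assoc z hzI c hcI d (Icc_beta_sub hN hd), hcz] at h1
    have h4 := (le_nn_iff hN hx hd).mpr h1
    linarith
  have hcgt : nn t x < c := by
    have h1 := claim (beta t) ⟨le_of_lt (beta_pos hN), le_rfl⟩ (nn_lt_beta hN hx h0)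
    rwa [mul_beta_right hN hc] at h1
  have hpow : ∀ n, nn t x < pw t c n := by
    intro n
    induction n with
    | zero => exact nn_lt_beta hN hx h0
    | succ n ih => exact claim (pw t c n) (pw_mem hN hc n) ih
  have htend := pw_tendsto_zero hN hc hcb
  have hev := htend.eventually_lt_const (nn_pos hN hx hb)
  obtain ⟨n, hn⟩ := hev.exists
  exact absurd hn (not_lt.mpr (le_of_lt (hpow n)))

lemma nn_strict_anti {x y : ℝ} (hx : x ∈ Icc 0 (beta t)) (hy : y ∈ Icc 0 (beta t))
    (hxy : x < y) : nn t y < nn t x := by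
  rcases eq_or_lt_of_le (nn_anti hN hx hy (le_of_lt hxy)) with h | h
  · exfalso
    have : nn t (nn t y) = nn t (nn t x) := by rw [h]
    rw [nn_invol hN hx, nn_invol hN hy] at this
    rw [this] at hxy
    exact lt_irrefl _ hxy
  · exact h

end Nn

/-! ### Fixed point of the negation -/

def fixn (t : ContTNorm) : ℝ := sSup {x | x ∈ Icc 0 (beta t) ∧ x ≤ nn t x}

section Fixn

variable (hN : (Nil t).Nonempty)

include hN

lemma fixn_spec : nn t (fixn t) = fixn t ∧ fixn t ∈ Icc 0 (beta t) := by
  set S := {x | x ∈ Icc 0 (beta t) ∧ x ≤ nn t x} with hS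
  have hSne : (0:ℝ) ∈ S := by
    refine ⟨⟨le_rfl, le_of_lt (beta_pos hN)⟩, ?_⟩
    rw [nn_zero hN]; exact le_of_lt (beta_pos hN)
  have hSbdd : BddAbove S := ⟨beta t, fun x hx => hx.1.2⟩
  have hzb : fixn t ∈ Icc 0 (beta t) := by
    constructor
    · exact le_csSup hSbdd hSne
    · exact csSup_le ⟨0, hSne⟩ (fun x hx => hx.1.2)
  have hub : ∀ x ∈ S, fixn t ≤ nn t x := by
    intro x hx
    apply csSup_le ⟨0, hSne⟩
    intro x' hx'
    rcases le_total x' x with h | h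
    · exact le_trans h hx.2
    · exact le_trans hx'.2 (nn_anti hN hx.1 hx'.1 h)
  have hzS : fixn t ∈ S := by
    refine ⟨hzb, ?_⟩
    apply csSup_le ⟨0, hSne⟩
    intro x hx
    have h1 : fixn t ≤ nn t x := hub x hx
    have h2 : nn t (nn t x) ≤ nn t (fixn t) := nn_anti hN hzb (nn_mem hN hx.1) h1
    rwa [nn_invol hN hx.1] at h2
  refine ⟨?_, hzb⟩
  rcases eq_or_lt_of_le hzS.2 with h | h
  · exact h.symm
  exfalso
  set x' := (fixn t + nn t (fixn t)) / 2 with hx'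
  have hx'm : x' ∈ Icc 0 (beta t) := by
    constructor
    · have := hzb.1; have := (nn_mem hN hzb).1; rw [hx']; linarith
    · have := hzb.2; have := (nn_mem hN hzb).2; rw [hx']; linarith
  have h1 : fixn t < x' := by rw [hx']; linarith
  have h2 : x' < nn t (fixn t) := by rw [hx']; linarith
  have hx'nS : x' ∉ S := fun hmem => absurd (le_csSup hSbdd hmem) (not_le.mpr h1)
  have h3 : nn t x' < x' := by
    rcases lt_or_ge (nn t x') x' with h | h
    · exact h
    · exact absurd ⟨hx'm, h⟩ hx'nS
  have h4 : fixn t < nn t x' := by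
    have := nn_strict_anti hN hx'm (nn_mem hN hzb) h2
    rwa [nn_invol hN hzb] at this
  have hnx'nS : nn t x' ∉ S := fun hmem => absurd (le_csSup hSbdd hmem) (not_le.mpr h4)
  have h5 : nn t (nn t x') < nn t x' := by
    rcases lt_or_ge (nn t (nn t x')) (nn t x') with h | h
    · exact h
    · exact absurd ⟨nn_mem hN hx'm, h⟩ hnx'nS
  rw [nn_invol hN hx'm] at h5
  exact absurd (lt_trans h3 h5) (lt_irrefl _)

lemma fixn_mem : fixn t ∈ Icc 0 (beta t) := (fixn_spec hN).2

lemma fixn_nn : nn t (fixn t) = fixn t := (fixn_spec hN).1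

lemma fixn_pos : 0 < fixn t := by
  rcases eq_or_lt_of_le (fixn_mem hN).1 with h | h
  · exfalso
    have := fixn_nn hN
    rw [← h, nn_zero hN] at this
    exact absurd this.symm (ne_of_lt (beta_pos hN))
  · exact h

lemma fixn_lt_beta : fixn t < beta t := by
  rcases eq_or_lt_of_le (fixn_mem hN).2 with h | h
  · exfalso
    have := fixn_nn hN
    rw [h, nn_beta hN] at this
    exact absurd this (ne_of_lt (beta_pos hN))
  · exact h

lemma fixn_sq : t.mul (fixn t) (fixn t) = 0 := by
  have := mul_nn hN (fixn_mem hN)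
  rwa [fixn_nn hN] at this

end Fixn


/-! ### The dyadic chain -/

def uc (t : ContTNorm) : ℕ → ℝ
  | 0 => fixn t
  | n+1 => sSup {s | s ∈ Icc 0 (beta t) ∧ t.mul s s = uc t n}

/-- number of steps at level `n` -/
def Kn (n : ℕ) : ℕ := 2^(n+1)

section Chain

variable (hN : (Nil t).Nonempty)

include hN

lemma root_mem {y : ℝ} (hy : y ∈ Icc 0 (beta t)) :
    sSup {s | s ∈ Icc 0 (beta t) ∧ t.mul s s = y} ∈
      {s | s ∈ Icc 0 (beta t) ∧ t.mul s s = y} := by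
  have hset : {s | s ∈ Icc 0 (beta t) ∧ t.mul s s = y}
      = Icc 0 (beta t) ∩ (fun s => t.mul s s) ⁻¹' {y} := by
    ext c
    constructor
    · rintro ⟨h1, h2⟩; exact ⟨h1, h2⟩
    · rintro ⟨h1, h2⟩; exact ⟨h1, h2⟩
  have hclosed : IsClosed {s | s ∈ Icc 0 (beta t) ∧ t.mul s s = y} := by
    rw [hset]
    exact ((contOn_diag t).mono (Icc_beta_sub hN)).preimage_isClosed_of_isClosed
      isClosed_Icc isClosed_singleton
  have hcomp : IsCompact {s | s ∈ Icc 0 (beta t) ∧ t.mul s s = y} :=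
    IsCompact.of_isClosed_subset isCompact_Icc hclosed (fun c hc => hc.1)
  have hne : ∃ s, s ∈ {s | s ∈ Icc 0 (beta t) ∧ t.mul s s = y} := by
    have hIcc : Icc (t.mul 0 0) (t.mul (beta t) (beta t)) ⊆
        (fun s => t.mul s s) '' (Icc 0 (beta t)) :=
      intermediate_value_Icc (le_of_lt (beta_pos hN))
        ((contOn_diag t).mono (Icc_beta_sub hN))
    rw [t.mul_zero' m0, beta_idem hN] at hIcc
    obtain ⟨s, hs, hsy⟩ := hIcc hy
    exact ⟨s, hs, hsy⟩
  exact hcomp.sSup_mem hne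

lemma uc_mem : ∀ n, uc t n ∈ Icc 0 (beta t) := by
  intro n
  induction n with
  | zero => exact fixn_mem hN
  | succ n ih => exact (root_mem hN ih).1

lemma uc_sq (n : ℕ) : t.mul (uc t (n+1)) (uc t (n+1)) = uc t n :=
  (root_mem hN (uc_mem hN n)).2

lemma uc_le_succ (n : ℕ) : uc t n ≤ uc t (n+1) := by
  have h := uc_sq hN n
  have h2 := mul_le_left t (Icc_beta_sub hN (uc_mem hN (n+1)))
    (Icc_beta_sub hN (uc_mem hN (n+1)))
  rw [h] at h2
  exact h2

lemma uc_mono : Monotone (uc t) := monotone_nat_of_le_succ (uc_le_succ hN)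

lemma uc_pos (n : ℕ) : 0 < uc t n :=
  lt_of_lt_of_le (fixn_pos hN) (uc_mono hN (Nat.zero_le n))

lemma uc_lt_beta : ∀ n, uc t n < beta t := by
  intro n
  induction n with
  | zero => exact fixn_lt_beta hN
  | succ n ih =>
      rcases eq_or_lt_of_le (uc_mem hN (n+1)).2 with h | h
      · exfalso
        have := uc_sq hN n
        rw [h, beta_idem hN] at this
        rw [this] at ih
        exact lt_irrefl _ ih
      · exact h

lemma pw_uc_sq (n m : ℕ) : pw t (uc t (n+1)) (2*m) = pw t (uc t n) m := by
  rw [pw_sq hN (uc_mem hN (n+1)), uc_sq hN n]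

/-- KEY lemma -/
lemma key {s y : ℝ} (hs : s ∈ Icc 0 (beta t)) (hy : y ∈ Icc 0 (beta t))
    (hsq : t.mul s s = y) (hypos : 0 < y) : nn t s ≤ t.mul (nn t y) s := by
  have hsI : s ∈ I01 := Icc_beta_sub hN hs
  have hyI : y ∈ I01 := Icc_beta_sub hN hy
  have hspos : 0 < s := by
    rcases eq_or_lt_of_le hs.1 with h | h
    · exfalso
      rw [← h] at hsq
      rw [t.mul_zero' m0] at hsq
      rw [← hsq] at hypos
      exact lt_irrefl _ hypos
    · exact h
  set g := nn t y with hg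
  have hgm : g ∈ Icc 0 (beta t) := nn_mem hN hy
  have hgI : g ∈ I01 := Icc_beta_sub hN hgm
  have hnsm : nn t s ∈ Icc 0 (beta t) := nn_mem hN hs
  have hnsg : nn t s ≤ g := by
    rw [hg, le_nn_iff hN hy hnsm, ← hsq,
      t.assoc s hsI s hsI (nn t s) (Icc_beta_sub hN hnsm), mul_nn hN hs,
      t.mul_zero' hsI]
  -- IVT : find e with t.mul g e = nn t s
  have hcont : ContinuousOn (t.mul g) (Icc 0 (beta t)) :=
    (contOn_slice t hgI).mono (Icc_beta_sub hN)
  have hIcc : Icc (t.mul g 0) (t.mul g (beta t)) ⊆ (t.mul g) '' (Icc 0 (beta t)) :=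
    intermediate_value_Icc (le_of_lt (beta_pos hN)) hcont
  rw [t.mul_zero' hgI, mul_beta_right hN hgm] at hIcc
  obtain ⟨e, he, hge⟩ := hIcc ⟨hnsm.1, hnsg⟩
  have heI : e ∈ I01 := Icc_beta_sub hN he
  rcases le_total e s with hes | hes
  · rw [← hge]
    exact t.mono g hgI e heI s hsI hes
  · -- e ≥ s : derive equality t.mul e s = y and cancel
    have h1 : t.mul (t.mul g e) s = 0 := by
      rw [hge, t.comm (nn t s) (Icc_beta_sub hN hnsm) s hsI]
      exact mul_nn hN hs
    rw [t.assoc g hgI e heI s hsI] at h1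
    have hesm : t.mul e s ∈ Icc 0 (beta t) :=
      mul_mem_Icc_beta hN he hs
    have h2 : t.mul e s ≤ nn t g := by
      rw [le_nn_iff hN hgm hesm]
      exact h1
    rw [hg, nn_invol hN hy] at h2
    have h3 : y ≤ t.mul e s := by
      rw [← hsq]
      exact mono_left t hsI heI hsI hes
    have h4 : t.mul e s = y := le_antisymm h2 h3
    -- cancel : t.mul s e = t.mul s s with positive value gives e = s
    have h5 : t.mul s e = t.mul s s := by
      rw [t.comm s hsI e heI, h4, hsq]
    have h6 : 0 < t.mul s e := by rw [h5, hsq]; exact hypos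
    have heqs := cancel hN hs he hs h5 h6
    rw [← hge, heqs]

lemma uc_H : ∀ n, nn t (uc t n) ≤ pw t (uc t n) (Kn n - 1) ∧ pw t (uc t n) (Kn n) = 0 := by
  intro n
  induction n with
  | zero =>
      constructor
      · show nn t (uc t 0) ≤ pw t (uc t 0) 1
        rw [pw_one hN (uc_mem hN 0)]
        show nn t (fixn t) ≤ fixn t
        rw [fixn_nn hN]
      · show pw t (uc t 0) 2 = 0
        show t.mul (uc t 0) (pw t (uc t 0) 1) = 0
        rw [pw_one hN (uc_mem hN 0)]
        exact fixn_sq hN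
  | succ n ih =>
      have hK : Kn (n+1) = 2 * Kn n := by simp [Kn]; ring
      have hKpos : 1 ≤ Kn n := Nat.one_le_two_pow
      constructor
      · have h1 : Kn (n+1) - 1 = 2*(Kn n - 1) + 1 := by omega
        rw [h1, pw_add hN (uc_mem hN (n+1)) (2*(Kn n -1)) 1,
          pw_uc_sq hN n (Kn n - 1), pw_one hN (uc_mem hN (n+1))]
        calc nn t (uc t (n+1)) ≤ t.mul (nn t (uc t n)) (uc t (n+1)) :=
              key hN (uc_mem hN (n+1)) (uc_mem hN n) (uc_sq hN n) (uc_pos hN n)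
        _ ≤ t.mul (pw t (uc t n) (Kn n - 1)) (uc t (n+1)) :=
              mono_left t (Icc_beta_sub hN (nn_mem hN (uc_mem hN n)))
                (Icc_beta_sub hN (pw_mem hN (uc_mem hN n) (Kn n - 1)))
                (Icc_beta_sub hN (uc_mem hN (n+1))) ih.1
      · rw [hK, pw_uc_sq hN n (Kn n)]
        exact ih.2

lemma pw_uc_pos {n k : ℕ} (hk : k ≤ Kn n - 1) : 0 < pw t (uc t n) k := by
  have h1 : pw t (uc t n) (Kn n - 1) ≤ pw t (uc t n) k :=
    pw_antitone hN (uc_mem hN n) hk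
  have h2 : 0 < nn t (uc t n) := nn_pos hN (uc_mem hN n) (uc_lt_beta hN n)
  have h3 := (uc_H hN n).1
  linarith

lemma pw_uc_strict {n k : ℕ} (hk : k < Kn n) :
    pw t (uc t n) (k+1) < pw t (uc t n) k := by
  have hle := pw_succ_le hN (uc_mem hN n) k
  rcases eq_or_lt_of_le hle with h | h
  · exfalso
    have hkpos : 0 < pw t (uc t n) k := pw_uc_pos hN (by omega)
    have hpwm : pw t (uc t n) k ∈ Icc 0 (beta t) := pw_mem hN (uc_mem hN n) k
    have h1 : t.mul (pw t (uc t n) k) (uc t n) = t.mul (pw t (uc t n) k) (beta t) := by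
      rw [mul_beta_right hN hpwm,
        t.comm (pw t (uc t n) k) (Icc_beta_sub hN hpwm) (uc t n)
          (Icc_beta_sub hN (uc_mem hN n))]
      exact h
    have h2 : 0 < t.mul (pw t (uc t n) k) (uc t n) := by
      rw [t.comm (pw t (uc t n) k) (Icc_beta_sub hN hpwm) (uc t n)
          (Icc_beta_sub hN (uc_mem hN n))]
      show 0 < pw t (uc t n) (k+1)
      rw [h]; exact hkpos
    have := cancel hN hpwm (uc_mem hN n) ⟨le_of_lt (beta_pos hN), le_rfl⟩ h1 h2
    exact absurd this (ne_of_lt (uc_lt_beta hN n))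
  · exact h

lemma pw_div {n m : ℕ} {c : ℝ} (hc : c ∈ Icc 0 (beta t)) (hm : m + 1 ≤ Kn n)
    (h : t.mul (uc t n) c ≤ pw t (uc t n) (m+1)) : c ≤ pw t (uc t n) m := by
  have hun := uc_mem hN n
  have hunI := Icc_beta_sub hN hun
  have hcI := Icc_beta_sub hN hc
  rcases eq_or_lt_of_le (mul_nonneg' t hunI hcI) with h0 | h0
  · -- t.mul (uc n) c = 0
    have h1 : c ≤ nn t (uc t n) := (le_nn_iff hN hun hc).mpr h0.symm
    have h2 : nn t (uc t n) ≤ pw t (uc t n) (Kn n - 1) := (uc_H hN n).1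
    have h3 : pw t (uc t n) (Kn n - 1) ≤ pw t (uc t n) m :=
      pw_antitone hN hun (by omega)
    linarith
  · by_contra hcon
    push_neg at hcon
    have h1 : pw t (uc t n) (m+1) ≤ t.mul (uc t n) c := by
      show t.mul (uc t n) (pw t (uc t n) m) ≤ t.mul (uc t n) c
      exact t.mono (uc t n) hunI (pw t (uc t n) m)
        (Icc_beta_sub hN (pw_mem hN hun m)) c hcI (le_of_lt hcon)
    have h2 : t.mul (uc t n) c = t.mul (uc t n) (pw t (uc t n) m) := by
      have := le_antisymm h h1
      rw [this]; rfl
    have := cancel hN hun hc (pw_mem hN hun m) h2 h0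
    rw [this] at hcon
    exact lt_irrefl _ hcon

lemma nn_pw_uc : ∀ n k j, j + k = Kn n →
    nn t (pw t (uc t n) k) = pw t (uc t n) j := by
  intro n k
  induction k with
  | zero =>
      intro j hj
      have : j = Kn n := by omega
      rw [this]
      show nn t (pw t (uc t n) 0) = pw t (uc t n) (Kn n)
      show nn t (beta t) = pw t (uc t n) (Kn n)
      rw [nn_beta hN, (uc_H hN n).2]
  | succ k ih =>
      intro j hj
      have hun := uc_mem hN n
      have hunI := Icc_beta_sub hN hun
      have hpwk := pw_mem hN hun k
      have hpwk1 := pw_mem hN hun (k+1)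
      -- upper: nn (pw (k+1)) ≤ pw j
      have hub : nn t (pw t (uc t n) (k+1)) ≤ pw t (uc t n) j := by
        set c := nn t (pw t (uc t n) (k+1)) with hcdef
        have hcm : c ∈ Icc 0 (beta t) := nn_mem hN hpwk1
        have h0 : t.mul (pw t (uc t n) (k+1)) c = 0 := mul_nn hN hpwk1
        have h1 : t.mul (pw t (uc t n) k) (t.mul (uc t n) c) = 0 := by
          rw [← t.assoc (pw t (uc t n) k) (Icc_beta_sub hN hpwk) (uc t n) hunI c
            (Icc_beta_sub hN hcm)]
          rw [t.comm (pw t (uc t n) k) (Icc_beta_sub hN hpwk) (uc t n) hunI]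
          exact h0
        have h2 : t.mul (uc t n) c ≤ nn t (pw t (uc t n) k) :=
          (le_nn_iff hN hpwk (mul_mem_Icc_beta hN hun hcm)).mpr h1
        have h3 : nn t (pw t (uc t n) k) = pw t (uc t n) (j+1) :=
          ih (j+1) (by omega)
        rw [h3] at h2
        exact pw_div hN hcm (by omega) h2
      -- lower
      have hlb : pw t (uc t n) j ≤ nn t (pw t (uc t n) (k+1)) := by
        rw [le_nn_iff hN hpwk1 (pw_mem hN hun j)]
        rw [← pw_add hN hun (k+1) j]
        have : k + 1 + j = Kn n := by omega
        rw [this]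
        exact (uc_H hN n).2
      linarith

lemma exists_uc_ge {x : ℝ} (hx : x ∈ Icc 0 (beta t)) (hlt : x < beta t) :
    ∃ n, x ≤ uc t n := by
  open Filter Topology in
  by_contra hcon
  push_neg at hcon
  have hbdd : BddAbove (range (uc t)) := ⟨beta t, by rintro y ⟨n, rfl⟩; exact (uc_mem hN n).2⟩
  set L := ⨆ n, uc t n with hL
  have hlim : Tendsto (uc t) atTop (𝓝 L) := tendsto_atTop_ciSup (uc_mono hN) hbdd
  have hLb : L ≤ beta t := ciSup_le (fun n => (uc_mem hN n).2)
  have hL0 : 0 < L := lt_of_lt_of_le (uc_pos hN 0) (le_ciSup hbdd 0)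
  have hLI : L ∈ I01 := ⟨le_of_lt hL0, le_trans hLb (beta_le_one hN)⟩
  have hsub : Tendsto (fun n => uc t (n+1)) atTop (𝓝 L) :=
    hlim.comp (tendsto_add_atTop_nat 1)
  have hjoint : Tendsto (fun n => t.mul (uc t (n+1)) (uc t (n+1))) atTop (𝓝 (t.mul L L)) :=
    tendsto_diag t hLI (fun n => Icc_beta_sub hN (uc_mem hN (n+1))) hsub
  have heq : (fun n => t.mul (uc t (n+1)) (uc t (n+1))) = fun n => uc t n := by
    funext n; exact uc_sq hN n
  rw [heq] at hjoint
  have hid : t.mul L L = L := tendsto_nhds_unique hjoint hlim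
  rcases eq_or_lt_of_le hLb with h | h
  · -- L = beta : but all uc n < x' ... contradiction with x < beta = sup
    have : x < L := by rw [h]; exact hlt
    obtain ⟨n, hn⟩ := exists_lt_of_lt_ciSup this
    exact absurd hn (not_lt.mpr (le_of_lt (hcon n)))
  · exact absurd hid (no_interior_idem hN hLI hL0 h)

end Chain


/-! ### The embedding into [0,1] -/

def Mn (t : ContTNorm) (x : ℝ) (n : ℕ) : ℕ := sInf {m | x ≤ pw t (uc t n) (Kn n - m)}

def dn (t : ContTNorm) (x : ℝ) (n : ℕ) : ℝ := (Mn t x n : ℝ) / (Kn n : ℝ)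

def phi (t : ContTNorm) (x : ℝ) : ℝ := ⨅ n, dn t x n

section Phi

variable (hN : (Nil t).Nonempty)

include hN

lemma Kn_pos (n : ℕ) : 0 < Kn n := Nat.pow_pos (by norm_num)

lemma Kn_cast_pos (n : ℕ) : (0:ℝ) < (Kn n : ℝ) := by
  exact_mod_cast Kn_pos hN n

lemma Kn_succ (n : ℕ) : Kn (n+1) = 2 * Kn n := by simp [Kn]; ring

lemma Mn_set_mem {x : ℝ} (hx : x ∈ Icc 0 (beta t)) (n : ℕ) :
    Kn n ∈ {m | x ≤ pw t (uc t n) (Kn n - m)} := by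
  have : Kn n - Kn n = 0 := by omega
  simp only [Set.mem_setOf_eq, this]
  exact hx.2

lemma Mn_le_iff {x : ℝ} (hx : x ∈ Icc 0 (beta t)) (n : ℕ) (m : ℕ) :
    Mn t x n ≤ m ↔ x ≤ pw t (uc t n) (Kn n - m) := by
  constructor
  · intro h
    have hspec : x ≤ pw t (uc t n) (Kn n - Mn t x n) :=
      Nat.sInf_mem (⟨Kn n, Mn_set_mem hN hx n⟩ : {m | x ≤ pw t (uc t n) (Kn n - m)}.Nonempty)
    calc x ≤ pw t (uc t n) (Kn n - Mn t x n) := hspec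
    _ ≤ pw t (uc t n) (Kn n - m) := pw_antitone hN (uc_mem hN n) (by omega)
  · intro h
    exact Nat.sInf_le h

lemma Mn_le_Kn {x : ℝ} (hx : x ∈ Icc 0 (beta t)) (n : ℕ) : Mn t x n ≤ Kn n :=
  (Mn_le_iff hN hx n (Kn n)).mpr (by
    have : Kn n - Kn n = 0 := by omega
    rw [this]; exact hx.2)

lemma Mn_spec {x : ℝ} (hx : x ∈ Icc 0 (beta t)) (n : ℕ) :
    x ≤ pw t (uc t n) (Kn n - Mn t x n) :=
  (Mn_le_iff hN hx n (Mn t x n)).mp le_rfl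

lemma Mn_min {x : ℝ} (hx : x ∈ Icc 0 (beta t)) (n : ℕ) {m : ℕ} (h : m < Mn t x n) :
    pw t (uc t n) (Kn n - m) < x := by
  by_contra hcon
  push_neg at hcon
  exact absurd ((Mn_le_iff hN hx n m).mpr hcon) (by omega)

lemma Mn_mono {x y : ℝ} (hx : x ∈ Icc 0 (beta t)) (hy : y ∈ Icc 0 (beta t))
    (hxy : x ≤ y) (n : ℕ) : Mn t x n ≤ Mn t y n :=
  (Mn_le_iff hN hx n _).mpr (le_trans hxy (Mn_spec hN hy n))

lemma pw_uc_strict_lt {n i j : ℕ} (hij : i < j) (hj : j ≤ Kn n) :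
    pw t (uc t n) j < pw t (uc t n) i := by
  have h1 : pw t (uc t n) j ≤ pw t (uc t n) (i+1) := pw_antitone hN (uc_mem hN n) (by omega)
  have h2 : pw t (uc t n) (i+1) < pw t (uc t n) i := pw_uc_strict hN (by omega)
  linarith

lemma Mn_refine_le {x : ℝ} (hx : x ∈ Icc 0 (beta t)) (n : ℕ) :
    Mn t x (n+1) ≤ 2 * Mn t x n := by
  rw [Mn_le_iff hN hx (n+1) _]
  have h1 : Kn (n+1) - 2 * Mn t x n = 2 * (Kn n - Mn t x n) := by
    have := Mn_le_Kn hN hx n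
    have := Kn_succ hN n
    omega
  rw [h1, pw_uc_sq hN n]
  exact Mn_spec hN hx n

lemma Mn_refine_ge {x : ℝ} (hx : x ∈ Icc 0 (beta t)) (n : ℕ) :
    2 * Mn t x n ≤ Mn t x (n+1) + 1 := by
  have ha := Mn_le_Kn hN hx (n+1)
  set a := Mn t x (n+1) with hadef
  have hq : Mn t x n ≤ (a+1)/2 := by
    rw [Mn_le_iff hN hx n _]
    have hq1 : (a+1)/2 ≤ Kn n := by
      have := Kn_succ hN n; omega
    have h2 : x ≤ pw t (uc t (n+1)) (Kn (n+1) - a) := Mn_spec hN hx (n+1)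
    have h3 : 2 * (Kn n - (a+1)/2) ≤ Kn (n+1) - a := by
      have := Kn_succ hN n; omega
    calc x ≤ pw t (uc t (n+1)) (Kn (n+1) - a) := h2
    _ ≤ pw t (uc t (n+1)) (2 * (Kn n - (a+1)/2)) := pw_antitone hN (uc_mem hN (n+1)) h3
    _ = pw t (uc t n) (Kn n - (a+1)/2) := pw_uc_sq hN n _
  omega

lemma dn_nonneg (x : ℝ) (n : ℕ) : 0 ≤ dn t x n := by
  have := Kn_cast_pos hN n
  unfold dn
  positivity

lemma dn_le_one {x : ℝ} (hx : x ∈ Icc 0 (beta t)) (n : ℕ) : dn t x n ≤ 1 := by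
  unfold dn
  rw [div_le_one (Kn_cast_pos hN n)]
  exact_mod_cast Mn_le_Kn hN hx n

lemma dn_antitone {x : ℝ} (hx : x ∈ Icc 0 (beta t)) : Antitone (dn t x) := by
  apply antitone_nat_of_succ_le
  intro n
  unfold dn
  rw [div_le_div_iff₀ (Kn_cast_pos hN (n+1)) (Kn_cast_pos hN n)]
  have h1 := Mn_refine_le hN hx n
  have h2 := Kn_succ hN n
  have h1' : (Mn t x (n+1) : ℝ) ≤ 2 * (Mn t x n : ℝ) := by exact_mod_cast h1
  have h2' : (Kn (n+1) : ℝ) = 2 * (Kn n : ℝ) := by exact_mod_cast h2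
  rw [h2']
  have := Kn_cast_pos hN n
  nlinarith [(Nat.cast_nonneg (Mn t x n) : (0:ℝ) ≤ (Mn t x n : ℝ))]

lemma dn_bddBelow (x : ℝ) : BddBelow (range (dn t x)) :=
  ⟨0, by rintro y ⟨n, rfl⟩; exact dn_nonneg hN x n⟩

open Filter Topology

lemma dn_tendsto (x : ℝ) (hx : x ∈ Icc 0 (beta t)) :
    Tendsto (dn t x) atTop (𝓝 (phi t x)) :=
  tendsto_atTop_ciInf (dn_antitone hN hx) (dn_bddBelow hN x)

lemma phi_le_dn (x : ℝ) (n : ℕ) : phi t x ≤ dn t x n :=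
  ciInf_le (dn_bddBelow hN x) n

lemma phi_nonneg (x : ℝ) : 0 ≤ phi t x :=
  le_ciInf (fun n => dn_nonneg hN x n)

lemma dn_le_phi_add {x : ℝ} (hx : x ∈ Icc 0 (beta t)) (n : ℕ) :
    dn t x n ≤ phi t x + 1 / (Kn n : ℝ) := by
  have claim : ∀ k, dn t x n ≤ dn t x (n+k) + 1/(Kn n : ℝ) - 1/(Kn (n+k) : ℝ) := by
    intro k
    induction k with
    | zero => simp
    | succ k ih =>
        have hstep : dn t x (n+k) ≤ dn t x (n+k+1) + 1/(Kn (n+k+1) : ℝ) := by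
          unfold dn
          have h1 := Mn_refine_ge hN hx (n+k)
          have h1' : 2 * (Mn t x (n+k) : ℝ) ≤ (Mn t x (n+k+1) : ℝ) + 1 := by
            exact_mod_cast h1
          have h2' : (Kn (n+k+1) : ℝ) = 2 * (Kn (n+k) : ℝ) := by
            exact_mod_cast Kn_succ hN (n+k)
          rw [h2']
          rw [← add_div, div_le_div_iff₀ (Kn_cast_pos hN (n+k))
            (by have := Kn_cast_pos hN (n+k); linarith)]
          nlinarith [Kn_cast_pos hN (n+k), (Nat.cast_nonneg (Mn t x (n+k)) : (0:ℝ) ≤ (Mn t x (n+k) : ℝ))]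
        have h2' : (Kn (n+k+1) : ℝ) = 2 * (Kn (n+k) : ℝ) := by
          exact_mod_cast Kn_succ hN (n+k)
        have hk := Kn_cast_pos hN (n+k)
        have hk1 := Kn_cast_pos hN (n+k+1)
        have harith : 1/(Kn (n+k+1) : ℝ) - 1/(Kn (n+k) : ℝ) = - (1/(Kn (n+k+1):ℝ)) := by
          rw [h2']
          field_simp
          ring
        calc dn t x n ≤ dn t x (n+k) + 1/(Kn n : ℝ) - 1/(Kn (n+k) : ℝ) := ih
        _ ≤ dn t x (n+k+1) + 1/(Kn (n+k+1) : ℝ) + 1/(Kn n : ℝ) - 1/(Kn (n+k) : ℝ) := by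
            linarith
        _ = dn t x (n+(k+1)) + 1/(Kn n : ℝ) - 1/(Kn (n+(k+1)) : ℝ) := by
            have : n + k + 1 = n + (k+1) := by omega
            rw [← this]
            linarith [harith]
  -- now : phi ≥ dn n - 1/Kn n
  have hlow : dn t x n - 1/(Kn n:ℝ) ≤ phi t x := by
    apply le_ciInf
    intro m
    rcases le_or_gt n m with h | h
    · obtain ⟨k, rfl⟩ : ∃ k, m = n + k := ⟨m - n, by omega⟩
      have := claim k
      have := Kn_cast_pos hN (n+k)
      have h3 : 0 < 1/(Kn (n+k):ℝ) := by positivity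
      linarith
    · have := dn_antitone hN hx (le_of_lt h)
      have hk := Kn_cast_pos hN n
      have h4 : (0:ℝ) < 1/(Kn n : ℝ) := by positivity
      linarith
  linarith

lemma phi_zero : phi t 0 = 0 := by
  have h : ∀ n, dn t 0 n = 0 := by
    intro n
    have : Mn t 0 n = 0 := by
      have := (Mn_le_iff hN ⟨le_rfl, le_of_lt (beta_pos hN)⟩ n 0).mpr
        (by
          have h0 : Kn n - 0 = Kn n := by omega
          rw [h0, (uc_H hN n).2])
      omega
    unfold dn
    rw [this]
    simp
  unfold phi
  rw [funext h]
  exact ciInf_const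

lemma phi_beta : phi t (beta t) = 1 := by
  have hb : beta t ∈ Icc 0 (beta t) := ⟨le_of_lt (beta_pos hN), le_rfl⟩
  have h : ∀ n, dn t (beta t) n = 1 := by
    intro n
    have hM : Mn t (beta t) n = Kn n := by
      have h1 := Mn_le_Kn hN hb n
      rcases eq_or_lt_of_le h1 with h | h
      · exact h
      · exfalso
        have h2 := Mn_spec hN hb n
        have h3 : 1 ≤ Kn n - Mn t (beta t) n := by omega
        have h4 : pw t (uc t n) (Kn n - Mn t (beta t) n) < pw t (uc t n) 0 :=
          pw_uc_strict_lt hN (by omega) (by omega)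
        have h5 : pw t (uc t n) 0 = beta t := rfl
        rw [h5] at h4
        linarith
    unfold dn
    rw [hM, div_self (ne_of_gt (Kn_cast_pos hN n))]
  unfold phi
  rw [funext h]
  exact ciInf_const

lemma phi_le_one {x : ℝ} (hx : x ∈ Icc 0 (beta t)) : phi t x ≤ 1 :=
  le_trans (phi_le_dn hN x 0) (dn_le_one hN hx 0)

lemma phi_mono {x y : ℝ} (hx : x ∈ Icc 0 (beta t)) (hy : y ∈ Icc 0 (beta t))
    (hxy : x ≤ y) : phi t x ≤ phi t y := by
  apply le_ciInf
  intro n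
  have h1 : (Mn t x n : ℝ) ≤ (Mn t y n : ℝ) := by exact_mod_cast Mn_mono hN hx hy hxy n
  calc phi t x ≤ dn t x n := phi_le_dn hN x n
  _ ≤ dn t y n := by
      unfold dn
      have := Kn_cast_pos hN n
      gcongr

lemma exists_uc_gt {x : ℝ} (hx : x ∈ Icc 0 (beta t)) (hlt : x < beta t) :
    ∃ n, x < uc t n := by
  set x' := (x + beta t)/2 with hx'
  have h1 : x < x' := by rw [hx']; linarith
  have h2 : x' < beta t := by rw [hx']; linarith
  have h3 : x' ∈ Icc 0 (beta t) := ⟨by rw [hx']; linarith [hx.1, le_of_lt (beta_pos hN)],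
    le_of_lt h2⟩
  obtain ⟨n, hn⟩ := exists_uc_ge hN h3 h2
  exact ⟨n, lt_of_lt_of_le h1 hn⟩

lemma phi_lt_one {x : ℝ} (hx : x ∈ Icc 0 (beta t)) (hlt : x < beta t) :
    phi t x < 1 := by
  obtain ⟨n, hn⟩ := exists_uc_ge hN hx hlt
  have hM : Mn t x n ≤ Kn n - 1 := by
    rw [Mn_le_iff hN hx n _]
    have h1 : Kn n - (Kn n - 1) = 1 := by have := Kn_pos hN n; omega
    rw [h1, pw_one hN (uc_mem hN n)]
    exact hn
  have h2 : (Mn t x n : ℝ) ≤ (Kn n : ℝ) - 1 := by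
    have hk := Kn_pos hN n
    have : ((Mn t x n : ℕ) : ℝ) ≤ ((Kn n - 1 : ℕ) : ℝ) := by exact_mod_cast hM
    rwa [Nat.cast_sub (by omega), Nat.cast_one] at this
  have h3 : dn t x n ≤ ((Kn n : ℝ) - 1)/(Kn n : ℝ) := by
    unfold dn
    have := Kn_cast_pos hN n
    gcongr
  have h4 : ((Kn n : ℝ) - 1)/(Kn n : ℝ) < 1 := by
    rw [div_lt_one (Kn_cast_pos hN n)]
    linarith
  calc phi t x ≤ dn t x n := phi_le_dn hN x n
  _ ≤ _ := h3
  _ < 1 := h4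

lemma phi_pos {x : ℝ} (hx : x ∈ Icc 0 (beta t)) (h0 : 0 < x) : 0 < phi t x := by
  rcases eq_or_lt_of_le (phi_nonneg hN x) with h | h
  swap
  · exact h
  exfalso
  -- phi = 0 : each Mn ≤ 1
  have hMle : ∀ n, Mn t x n ≤ 1 := by
    intro n
    have h1 := dn_le_phi_add hN hx n
    rw [← h] at h1
    unfold dn at h1
    rw [div_le_iff₀ (Kn_cast_pos hN n)] at h1
    have h2 : (Mn t x n : ℝ) ≤ 1 := by
      have := Kn_cast_pos hN n
      calc (Mn t x n : ℝ) ≤ (0 + 1/(Kn n:ℝ)) * (Kn n:ℝ) := h1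
      _ = 1 := by field_simp; ring
    exact_mod_cast h2
  -- so x ≤ nn (uc n) for all n
  have hxle : ∀ n, uc t n ≤ nn t x := by
    intro n
    have h1 : x ≤ pw t (uc t n) (Kn n - 1) := by
      have := (Mn_le_iff hN hx n 1).mpr
      have h2 := (Mn_le_iff hN hx n 1).mp (hMle n)
      exact h2
    have h2 : pw t (uc t n) (Kn n - 1) = nn t (uc t n) := by
      have h3 := nn_pw_uc hN n 1 (Kn n - 1) (by have := Kn_pos hN n; omega)
      rw [pw_one hN (uc_mem hN n)] at h3
      exact h3.symm
    rw [h2] at h1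
    -- x ≤ nn (uc n)  ⇒  t.mul (uc n) x = 0  ⇒  uc n ≤ nn x
    have h4 := (le_nn_iff hN (uc_mem hN n) hx).mp h1
    rw [le_nn_iff hN hx (uc_mem hN n)]
    rw [t.comm x (Icc_beta_sub hN hx) (uc t n) (Icc_beta_sub hN (uc_mem hN n))]
    exact h4
  have hnx : nn t x < beta t := nn_lt_beta hN hx h0
  obtain ⟨n, hn⟩ := exists_uc_gt hN (nn_mem hN hx) hnx
  exact absurd (hxle n) (not_le.mpr hn)

end Phi


section PhiHom

variable (hN : (Nil t).Nonempty)

include hN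

open Filter Topology

lemma Mn_pos_of_pos {x : ℝ} (hx : x ∈ Icc 0 (beta t)) (h0 : 0 < x) (n : ℕ) :
    1 ≤ Mn t x n := by
  by_contra hcon
  push_neg at hcon
  have h1 : Mn t x n = 0 := by omega
  have h2 := (Mn_le_iff hN hx n 0).mp (by omega)
  have h3 : Kn n - 0 = Kn n := by omega
  rw [h3, (uc_H hN n).2] at h2
  linarith

lemma Mn_mul_le {x y : ℝ} (hx : x ∈ Icc 0 (beta t)) (hy : y ∈ Icc 0 (beta t)) (n : ℕ) :
    (Mn t (t.mul x y) n : ℝ) ≤ max ((Mn t x n : ℝ) + (Mn t y n : ℝ) - (Kn n : ℝ)) 0 := by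
  set a := Mn t x n with ha
  set b := Mn t y n with hb
  have haK := Mn_le_Kn hN hx n
  have hbK := Mn_le_Kn hN hy n
  have hxy := mul_mem_Icc_beta hN hx hy
  have hmul : t.mul x y ≤ pw t (uc t n) ((Kn n - a) + (Kn n - b)) := by
    rw [pw_add hN (uc_mem hN n)]
    calc t.mul x y ≤ t.mul (pw t (uc t n) (Kn n - a)) y :=
          mono_left t (Icc_beta_sub hN hx)
            (Icc_beta_sub hN (pw_mem hN (uc_mem hN n) _)) (Icc_beta_sub hN hy)
            (Mn_spec hN hx n)
    _ ≤ t.mul (pw t (uc t n) (Kn n - a)) (pw t (uc t n) (Kn n - b)) :=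
          t.mono _ (Icc_beta_sub hN (pw_mem hN (uc_mem hN n) _)) y (Icc_beta_sub hN hy)
            _ (Icc_beta_sub hN (pw_mem hN (uc_mem hN n) _)) (Mn_spec hN hy n)
  rcases le_or_gt (a + b) (Kn n) with hab | hab
  · -- t.mul x y = 0
    have h1 : Kn n ≤ (Kn n - a) + (Kn n - b) := by omega
    have h2 : pw t (uc t n) ((Kn n - a) + (Kn n - b)) ≤ pw t (uc t n) (Kn n) :=
      pw_antitone hN (uc_mem hN n) h1
    rw [(uc_H hN n).2] at h2
    have h3 : Mn t (t.mul x y) n = 0 := by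
      have := (Mn_le_iff hN hxy n 0).mpr (by
        have h4 : Kn n - 0 = Kn n := by omega
        rw [h4, (uc_H hN n).2]
        linarith)
      omega
    rw [h3]
    simp
  · have h1 : (Kn n - a) + (Kn n - b) = Kn n - (a + b - Kn n) := by omega
    rw [h1] at hmul
    have h2 : Mn t (t.mul x y) n ≤ a + b - Kn n := (Mn_le_iff hN hxy n _).mpr hmul
    have h3 : (Mn t (t.mul x y) n : ℝ) ≤ ((a + b - Kn n : ℕ) : ℝ) := by exact_mod_cast h2
    have h4 : ((a + b - Kn n : ℕ) : ℝ) = (a:ℝ) + b - Kn n := by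
      have : a + b - Kn n + Kn n = a + b := by omega
      have h5 : (((a + b - Kn n) + Kn n : ℕ) : ℝ) = ((a + b : ℕ) : ℝ) := by
        rw [this]
      push_cast at h5
      linarith
  
    rw [h4] at h3
    exact le_trans h3 (le_max_left _ _)

lemma Mn_mul_ge {x y : ℝ} (hx : x ∈ Icc 0 (beta t)) (hy : y ∈ Icc 0 (beta t)) (n : ℕ) :
    (Mn t x n : ℝ) + (Mn t y n : ℝ) - (Kn n : ℝ) - 2 ≤ (Mn t (t.mul x y) n : ℝ) := by
  set a := Mn t x n with ha
  set b := Mn t y n with hb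
  have haK := Mn_le_Kn hN hx n
  have hbK := Mn_le_Kn hN hy n
  have hxy := mul_mem_Icc_beta hN hx hy
  have hMnn : (0:ℝ) ≤ (Mn t (t.mul x y) n : ℝ) := Nat.cast_nonneg _
  rcases Nat.eq_zero_or_pos a with ha0 | ha1
  · rw [ha0]
    have : (b:ℝ) ≤ (Kn n : ℝ) := by exact_mod_cast hbK
    simp only [Nat.cast_zero]
    linarith
  rcases Nat.eq_zero_or_pos b with hb0 | hb1
  · rw [hb0]
    have : (a:ℝ) ≤ (Kn n : ℝ) := by exact_mod_cast haK
    simp only [Nat.cast_zero]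
    linarith
  rcases le_or_gt (a + b) (Kn n + 2) with hab | hab
  · have h1 : (a:ℝ) + b ≤ (Kn n : ℝ) + 2 := by exact_mod_cast hab
    linarith
  -- main case
  have hxgt : pw t (uc t n) (Kn n - a + 1) < x := by
    have := Mn_min hN hx n (show a - 1 < a by omega)
    have he : Kn n - (a-1) = Kn n - a + 1 := by omega
    rwa [he] at this
  have hygt : pw t (uc t n) (Kn n - b + 1) < y := by
    have := Mn_min hN hy n (show b - 1 < b by omega)
    have he : Kn n - (b-1) = Kn n - b + 1 := by omega
    rwa [he] at this
  set e := a + b - Kn n - 2 with hedef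
  have hexp : (Kn n - a + 1) + (Kn n - b + 1) = Kn n - e := by omega
  have hmul_ge : pw t (uc t n) (Kn n - e) ≤ t.mul x y := by
    rw [← hexp, pw_add hN (uc_mem hN n)]
    calc t.mul (pw t (uc t n) (Kn n - a + 1)) (pw t (uc t n) (Kn n - b + 1))
        ≤ t.mul x (pw t (uc t n) (Kn n - b + 1)) :=
          mono_left t (Icc_beta_sub hN (pw_mem hN (uc_mem hN n) _)) (Icc_beta_sub hN hx)
            (Icc_beta_sub hN (pw_mem hN (uc_mem hN n) _)) (le_of_lt hxgt)
    _ ≤ t.mul x y :=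
          t.mono x (Icc_beta_sub hN hx) _ (Icc_beta_sub hN (pw_mem hN (uc_mem hN n) _))
            y (Icc_beta_sub hN hy) (le_of_lt hygt)
  have hclaim : e ≤ Mn t (t.mul x y) n := by
    by_contra hcon
    push_neg at hcon
    set m := Mn t (t.mul x y) n with hm
    have hspec := Mn_spec hN hxy n
    have hstrict : pw t (uc t n) (Kn n - m) < pw t (uc t n) (Kn n - e) :=
      pw_uc_strict_lt hN (by omega) (by omega)
    linarith
  have : ((e : ℕ) : ℝ) ≤ (Mn t (t.mul x y) n : ℝ) := by exact_mod_cast hclaim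
  have he' : ((e : ℕ) : ℝ) = (a:ℝ) + b - Kn n - 2 := by
    have h5 : e + (Kn n + 2) = a + b := by omega
    have h6 : ((e + (Kn n + 2) : ℕ) : ℝ) = ((a + b : ℕ):ℝ) := by rw [h5]
    push_cast at h6
    linarith
  linarith [he' ▸ this]

lemma invKn_tendsto : Tendsto (fun n => 1/(Kn n : ℝ)) atTop (𝓝 0) := by
  have h1 : ∀ n : ℕ, 1/(Kn n : ℝ) = (1/2 : ℝ)^(n+1) := by
    intro n
    have : (Kn n : ℝ) = 2^(n+1) := by
      unfold Kn
      push_cast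
      ring
    rw [this, div_pow, one_pow]
  rw [funext h1]
  have h2 : Tendsto (fun m : ℕ => (1/2:ℝ)^m) atTop (𝓝 0) :=
    tendsto_pow_atTop_nhds_zero_of_lt_one (by norm_num) (by norm_num)
  exact h2.comp (tendsto_add_atTop_nat 1)

lemma phi_mul {x y : ℝ} (hx : x ∈ Icc 0 (beta t)) (hy : y ∈ Icc 0 (beta t)) :
    phi t (t.mul x y) = max 0 (phi t x + phi t y - 1) := by
  have hxy := mul_mem_Icc_beta hN hx hy
  have hTx := dn_tendsto hN x hx
  have hTy := dn_tendsto hN y hy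
  have hTxy := dn_tendsto hN (t.mul x y) hxy
  have hupper : phi t (t.mul x y) ≤ max 0 (phi t x + phi t y - 1) := by
    have hRHS : Tendsto (fun n => max 0 (dn t x n + dn t y n - 1)) atTop
        (𝓝 (max 0 (phi t x + phi t y - 1))) :=
      Tendsto.max tendsto_const_nhds ((hTx.add hTy).sub_const 1)
    apply le_of_tendsto_of_tendsto' hTxy hRHS
    intro n
    have h1 := Mn_mul_le hN hx hy n
    have hk := Kn_cast_pos hN n
    rcases le_total ((Mn t x n : ℝ) + (Mn t y n : ℝ) - (Kn n : ℝ)) 0 with h | h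
    · rw [max_eq_right h] at h1
      have h2 : dn t (t.mul x y) n ≤ 0 := by
        unfold dn
        apply div_nonpos_of_nonpos_of_nonneg h1 (le_of_lt hk)
      exact le_trans h2 (le_max_left _ _)
    · rw [max_eq_left h] at h1
      have h2 : dn t (t.mul x y) n ≤ dn t x n + dn t y n - 1 := by
        unfold dn
        rw [div_le_iff₀ hk]
        calc (Mn t (t.mul x y) n : ℝ) ≤ (Mn t x n : ℝ) + (Mn t y n : ℝ) - (Kn n : ℝ) := h1
        _ = ((Mn t x n : ℝ)/(Kn n:ℝ) + (Mn t y n : ℝ)/(Kn n:ℝ) - 1) * (Kn n : ℝ) := by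
            field_simp
      exact le_trans h2 (le_max_right _ _)
  have hlower1 : phi t x + phi t y - 1 ≤ phi t (t.mul x y) := by
    have hLHS : Tendsto (fun n => dn t x n + dn t y n - 1 - 2/(Kn n : ℝ)) atTop
        (𝓝 (phi t x + phi t y - 1)) := by
      have h2 : Tendsto (fun n => 2/(Kn n : ℝ)) atTop (𝓝 0) := by
        have := (invKn_tendsto hN).const_mul (2:ℝ)
        simp only [mul_zero] at this
        convert this using 2 with n
        ring
      have := ((hTx.add hTy).sub_const 1).sub h2
      simpa using this
    apply le_of_tendsto_of_tendsto' hLHS hTxy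
    intro n
    have h1 := Mn_mul_ge hN hx hy n
    have hk := Kn_cast_pos hN n
    unfold dn
    have heq : (Mn t x n : ℝ)/(Kn n:ℝ) + (Mn t y n : ℝ)/(Kn n:ℝ) - 1 - 2/(Kn n:ℝ)
        = ((Mn t x n : ℝ) + (Mn t y n:ℝ) - (Kn n:ℝ) - 2)/(Kn n : ℝ) := by
      field_simp
    rw [heq]
    exact div_le_div_of_nonneg_right h1 hk.le
  have h0 : 0 ≤ phi t (t.mul x y) := phi_nonneg hN _
  exact le_antisymm hupper (max_le h0 hlower1)

end PhiHom


section PhiNeg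

variable (hN : (Nil t).Nonempty)

include hN

open Filter Topology

lemma Mn_nn_bounds {x : ℝ} (hx : x ∈ Icc 0 (beta t)) (h0 : 0 < x) (n : ℕ) :
    (Kn n : ℝ) - (Mn t x n : ℝ) ≤ (Mn t (nn t x) n : ℝ) ∧
      (Mn t (nn t x) n : ℝ) ≤ (Kn n : ℝ) - (Mn t x n : ℝ) + 1 := by
  set a := Mn t x n with ha
  have ha1 : 1 ≤ a := Mn_pos_of_pos hN hx h0 n
  have haK : a ≤ Kn n := Mn_le_Kn hN hx n
  have hnnm := nn_mem hN hx
  constructor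
  · -- lower bound
    rcases eq_or_lt_of_le haK with haeq | halt
    · have : (a:ℝ) = (Kn n : ℝ) := by exact_mod_cast haeq
      rw [this]
      simp only [sub_self]
      exact Nat.cast_nonneg _
    · have hclaim : Kn n - a ≤ Mn t (nn t x) n := by
        by_contra hcon
        push_neg at hcon
        have h1 : Mn t (nn t x) n ≤ Kn n - a - 1 := by omega
        have h2 := (Mn_le_iff hN hnnm n _).mp h1
        have h3 : Kn n - (Kn n - a - 1) = a + 1 := by omega
        rw [h3] at h2
        have h4 : nn t (pw t (uc t n) (a+1)) ≤ nn t (nn t x) :=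
          nn_anti hN (nn_mem hN hx) (pw_mem hN (uc_mem hN n) (a+1)) h2
        rw [nn_invol hN hx] at h4
        have h5 : nn t (pw t (uc t n) (a+1)) = pw t (uc t n) (Kn n - a - 1) :=
          nn_pw_uc hN n (a+1) (Kn n - a - 1) (by omega)
        rw [h5] at h4
        have h6 := Mn_spec hN hx n
        have h7 : pw t (uc t n) (Kn n - a) < pw t (uc t n) (Kn n - a - 1) :=
          pw_uc_strict_lt hN (by omega) (by omega)
        linarith
      have : ((Kn n - a : ℕ) : ℝ) ≤ (Mn t (nn t x) n : ℝ) := by exact_mod_cast hclaim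
      rwa [Nat.cast_sub haK] at this
  · -- upper bound
    have hclaim : Mn t (nn t x) n ≤ Kn n - a + 1 := by
      rw [Mn_le_iff hN hnnm n _]
      have h3 : Kn n - (Kn n - a + 1) = a - 1 := by omega
      rw [h3]
      have h1 : pw t (uc t n) (Kn n - a + 1) < x := by
        have := Mn_min hN hx n (show a - 1 < a by omega)
        have he : Kn n - (a-1) = Kn n - a + 1 := by omega
        rwa [he] at this
      have h2 : nn t x ≤ nn t (pw t (uc t n) (Kn n - a + 1)) :=
        nn_anti hN (pw_mem hN (uc_mem hN n) _) hx (le_of_lt h1)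
      have h4 : nn t (pw t (uc t n) (Kn n - a + 1)) = pw t (uc t n) (a - 1) :=
        nn_pw_uc hN n (Kn n - a + 1) (a-1) (by omega)
      rw [h4] at h2
      exact h2
    have h8 : ((Kn n - a + 1 : ℕ) : ℝ) = (Kn n : ℝ) - a + 1 := by
      push_cast [Nat.cast_sub haK]
      ring
    have : (Mn t (nn t x) n : ℝ) ≤ ((Kn n - a + 1 : ℕ) : ℝ) := by exact_mod_cast hclaim
    rwa [h8] at this

lemma phi_nn {x : ℝ} (hx : x ∈ Icc 0 (beta t)) : phi t (nn t x) = 1 - phi t x := by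
  rcases eq_or_lt_of_le hx.1 with h0 | h0
  · rw [← h0, nn_zero hN, phi_zero hN, phi_beta hN]
    norm_num
  have hnnm := nn_mem hN hx
  have hTn := dn_tendsto hN (nn t x) hnnm
  have hTx := dn_tendsto hN x hx
  have hlow : Tendsto (fun n => 1 - dn t x n) atTop (𝓝 (1 - phi t x)) :=
    (tendsto_const_nhds.sub hTx)
  have hup : Tendsto (fun n => 1 - dn t x n + 1/(Kn n:ℝ)) atTop (𝓝 (1 - phi t x)) := by
    have := hlow.add (invKn_tendsto hN)
    simpa using this
  have hsq : Tendsto (dn t (nn t x)) atTop (𝓝 (1 - phi t x)) := by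
    apply tendsto_of_tendsto_of_tendsto_of_le_of_le' hlow hup
    · apply Eventually.of_forall
      intro n
      have h1 := (Mn_nn_bounds hN hx h0 n).1
      have hk := Kn_cast_pos hN n
      unfold dn
      rw [le_div_iff₀ hk]
      calc (1 - (Mn t x n : ℝ)/(Kn n:ℝ)) * (Kn n : ℝ) = (Kn n:ℝ) - (Mn t x n : ℝ) := by
            field_simp
      _ ≤ (Mn t (nn t x) n : ℝ) := h1
    · apply Eventually.of_forall
      intro n
      have h1 := (Mn_nn_bounds hN hx h0 n).2
      have hk := Kn_cast_pos hN n
      unfold dn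
      rw [div_le_iff₀ hk]
      calc (Mn t (nn t x) n : ℝ) ≤ (Kn n:ℝ) - (Mn t x n : ℝ) + 1 := h1
      _ = (1 - (Mn t x n:ℝ)/(Kn n:ℝ) + 1/(Kn n:ℝ)) * (Kn n:ℝ) := by field_simp
  exact tendsto_nhds_unique hTn hsq

lemma phi_strict {x y : ℝ} (hx : x ∈ Icc 0 (beta t)) (hy : y ∈ Icc 0 (beta t))
    (hlt : y < x) : phi t y < phi t x := by
  have hx0 : 0 < x := lt_of_le_of_lt hy.1 hlt
  -- divisibility
  have hcont : ContinuousOn (t.mul x) (Icc 0 (beta t)) :=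
    (contOn_slice t (Icc_beta_sub hN hx)).mono (Icc_beta_sub hN)
  have hIcc : Icc (t.mul x 0) (t.mul x (beta t)) ⊆ (t.mul x) '' (Icc 0 (beta t)) :=
    intermediate_value_Icc (le_of_lt (beta_pos hN)) hcont
  rw [t.mul_zero' (Icc_beta_sub hN hx), mul_beta_right hN hx] at hIcc
  obtain ⟨c, hc, hcy⟩ := hIcc ⟨hy.1, le_of_lt hlt⟩
  have hcb : c < beta t := by
    rcases eq_or_lt_of_le hc.2 with h | h
    · exfalso; rw [h, mul_beta_right hN hx] at hcy; rw [hcy] at hlt; exact lt_irrefl _ hlt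
    · exact h
  have h1 : phi t y = max 0 (phi t x + phi t c - 1) := by
    rw [← hcy]; exact phi_mul hN hx hc
  have h2 : phi t c < 1 := phi_lt_one hN hc hcb
  have h3 : 0 < phi t x := phi_pos hN hx hx0
  rcases le_total (phi t x + phi t c - 1) 0 with h | h
  · rw [h1, max_eq_left h]; exact h3
  · rw [h1, max_eq_right h]; linarith

lemma resid_eq_nn {x y : ℝ} (hx : x ∈ Icc 0 (beta t)) (hy : y ∈ Icc 0 (beta t))
    (hlt : y < x) : resid t x y = nn t (t.mul x (nn t y)) := by
  have hxI := Icc_beta_sub hN hx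
  have hyI := Icc_beta_sub hN hy
  have hnny := nn_mem hN hy
  have hxnm := mul_mem_Icc_beta hN hx hnny
  set r := nn t (t.mul x (nn t y)) with hrdef
  have hrm : r ∈ Icc 0 (beta t) := nn_mem hN hxnm
  have hreassoc : ∀ c, c ∈ Icc 0 (beta t) →
      t.mul (t.mul x (nn t y)) c = t.mul (nn t y) (t.mul x c) := by
    intro c hc
    rw [t.comm x hxI (nn t y) (Icc_beta_sub hN hnny),
      t.assoc (nn t y) (Icc_beta_sub hN hnny) x hxI c (Icc_beta_sub hN hc)]
  have hmulr : t.mul x r ≤ y := by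
    have h1 : t.mul (t.mul x (nn t y)) r = 0 := mul_nn hN hxnm
    rw [hreassoc r hrm] at h1
    have h2 : t.mul x r ≤ nn t (nn t y) :=
      (le_nn_iff hN hnny (mul_mem_Icc_beta hN hx hrm)).mpr h1
    rwa [nn_invol hN hy] at h2
  apply le_antisymm
  · apply csSup_le ⟨0, rs_nonempty t hxI hy.1⟩
    rintro c ⟨hcI, hcle⟩
    have hcb : c ≤ beta t := by
      by_contra hcon
      push_neg at hcon
      rw [mul_high hN hx hcI (le_of_lt hcon)] at hcle
      linarith
    have hcm : c ∈ Icc 0 (beta t) := ⟨hcI.1, hcb⟩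
    have h2 : t.mul x c ≤ nn t (nn t y) := by rw [nn_invol hN hy]; exact hcle
    have h3 : t.mul (nn t y) (t.mul x c) = 0 :=
      (le_nn_iff hN hnny (mul_mem_Icc_beta hN hx hcm)).mp h2
    rw [← hreassoc c hcm] at h3
    exact (le_nn_iff hN hxnm hcm).mpr h3
  · exact le_csSup (rs_bdd t x y) ⟨Icc_beta_sub hN hrm, hmulr⟩

omit hN in
lemma resid_one_right {t : ContTNorm} {y : ℝ} (hy : y ∈ I01) : resid t 1 y = y := by
  apply le_antisymm
  · apply csSup_le ⟨0, rs_nonempty t m1 hy.1⟩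
    rintro c ⟨hcI, hcle⟩
    rwa [t.one_mul' c hcI] at hcle
  · apply le_csSup (rs_bdd t 1 y)
    exact ⟨hy, by rw [t.one_mul' y hy]⟩

end PhiNeg


/-! ### Final assembly -/

def phihat (t : ContTNorm) : ℝ → ℝ := fun x => if x ≤ beta t then phi t x else 1

section Final

variable (hN : (Nil t).Nonempty)

include hN

lemma phihat_low {x : ℝ} (hx : x ∈ Icc 0 (beta t)) : phihat t x = phi t x :=
  if_pos hx.2

lemma phihat_one : phihat t 1 = 1 := by
  unfold phihat
  split_ifs with h
  · have hb : beta t = 1 := le_antisymm (beta_le_one hN) h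
    have := phi_beta hN
    rwa [hb] at this
  · rfl

lemma phihat_nonneg (x : ℝ) : 0 ≤ phihat t x := by
  unfold phihat
  split_ifs
  · exact phi_nonneg hN x
  · norm_num

lemma phihat_le_one {x : ℝ} (hx : x ∈ Icc 0 (beta t) ∨ x = 1) : phihat t x ≤ 1 := by
  rcases hx with hx | rfl
  · rw [phihat_low hN hx]; exact phi_le_one hN hx
  · rw [phihat_one hN]

omit hN in
lemma luk_resid {x y : ℝ} (hx : x ∈ I01) (hy : y ∈ I01) :
    resid lukT x y = min 1 (1 - x + y) := by
  have hm : min 1 (1 - x + y) ∈ I01 := by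
    constructor
    · apply le_min (by norm_num)
      have := hx.2; have := hy.1; linarith
    · exact min_le_left _ _
  apply le_antisymm
  · apply csSup_le ⟨0, rs_nonempty lukT hx hy.1⟩
    rintro c ⟨hcI, hcle⟩
    have h1 : max 0 (x + c - 1) ≤ y := hcle
    have h2 : x + c - 1 ≤ y := le_trans (le_max_right _ _) h1
    exact le_min hcI.2 (by linarith)
  · apply le_csSup (rs_bdd lukT x y)
    refine ⟨hm, ?_⟩
    show max 0 (x + min 1 (1 - x + y) - 1) ≤ y
    apply max_le hy.1
    have := min_le_right 1 (1 - x + y)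
    linarith

variable {T : TruthAlg t}

lemma T_struct (hT : ∀ x ∈ T.carrier, x = 0 ∨ x = 1 ∨ x ∈ Nil t) :
    ∀ x ∈ T.carrier, x = 1 ∨ (x ∈ Icc 0 (beta t) ∧ x < beta t) := by
  intro x hx
  rcases hT x hx with rfl | rfl | hnil
  · exact Or.inr ⟨⟨le_rfl, le_of_lt (beta_pos hN)⟩, beta_pos hN⟩
  · exact Or.inl rfl
  · have h1 : x ≤ beta t := le_beta_of_nil hnil
    have h2 : x ≠ beta t := by
      intro h; rw [h] at hnil; exact beta_not_nil hN hnil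
    exact Or.inr ⟨⟨hnil.1.1, h1⟩, lt_of_le_of_ne h1 h2⟩

lemma mul_hom (hT : ∀ x ∈ T.carrier, x = 1 ∨ (x ∈ Icc 0 (beta t) ∧ x < beta t))
    {a b : ℝ} (ha : a ∈ T.carrier) (hb : b ∈ T.carrier) :
    phihat t (t.mul a b) = lukT.mul (phihat t a) (phihat t b) := by
  have haI := T.subset ha
  have hbI := T.subset hb
  have hluk : ∀ p q : ℝ, lukT.mul p q = max 0 (p + q - 1) := fun _ _ => rfl
  rcases hT a ha with rfl | hal
  · rw [t.one_mul' b hbI, hluk, phihat_one hN]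
    have h1 : max 0 (1 + phihat t b - 1) = phihat t b := by
      rw [show (1:ℝ) + phihat t b - 1 = phihat t b by ring]
      exact max_eq_right (phihat_nonneg hN b)
    rw [h1]
  rcases hT b hb with rfl | hbl
  · rw [mul_one'' t haI, hluk, phihat_one hN]
    have h1 : max 0 (phihat t a + 1 - 1) = phihat t a := by
      rw [show phihat t a + 1 - 1 = phihat t a by ring]
      exact max_eq_right (phihat_nonneg hN a)
    rw [h1]
  · have hab := mul_mem_Icc_beta hN hal.1 hbl.1
    rw [phihat_low hN hab, phihat_low hN hal.1, phihat_low hN hbl.1, hluk]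
    exact phi_mul hN hal.1 hbl.1

lemma resid_hom (hT : ∀ x ∈ T.carrier, x = 1 ∨ (x ∈ Icc 0 (beta t) ∧ x < beta t))
    {a b : ℝ} (ha : a ∈ T.carrier) (hb : b ∈ T.carrier) :
    phihat t (resid t a b) = resid lukT (phihat t a) (phihat t b) := by
  have haI := T.subset ha
  have hbI := T.subset hb
  have hpaI : phihat t a ∈ I01 := ⟨phihat_nonneg hN a, phihat_le_one hN (by
    rcases hT a ha with h | h
    · exact Or.inr h
    · exact Or.inl h.1)⟩
  have hpbI : phihat t b ∈ I01 := ⟨phihat_nonneg hN b, phihat_le_one hN (by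
    rcases hT b hb with h | h
    · exact Or.inr h
    · exact Or.inl h.1)⟩
  rw [luk_resid hpaI hpbI]
  rcases hT b hb with rfl | hbl
  · -- b = 1 : resid t a 1 = 1
    rw [resid_eq_one_of_le t haI m1 haI.2, phihat_one hN]
    rw [min_eq_left]
    have := hpaI.2
    linarith
  rcases hT a ha with rfl | hal
  · -- a = 1
    rw [resid_one_right hbI, phihat_one hN]
    rw [min_eq_right]
    · ring_nf
    · have := phihat_le_one hN (Or.inl hbl.1); linarith
  · rcases le_or_gt a b with hab | hab
    · rw [resid_eq_one_of_le t haI hbI hab, phihat_one hN]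
      rw [min_eq_left]
      have := phi_mono hN hal.1 hbl.1 hab
      rw [phihat_low hN hal.1, phihat_low hN hbl.1]
      linarith
    · rw [resid_eq_nn hN hal.1 hbl.1 hab]
      have hnnb := nn_mem hN hbl.1
      have habm := mul_mem_Icc_beta hN hal.1 hnnb
      rw [phihat_low hN (nn_mem hN habm)]
      rw [phi_nn hN habm, phi_mul hN hal.1 hnnb, phi_nn hN hbl.1]
      rw [phihat_low hN hal.1, phihat_low hN hbl.1]
      have hstrict : phi t b < phi t a := phi_strict hN hal.1 hbl.1 hab
      have h1 : max 0 (phi t a + (1 - phi t b) - 1) = phi t a - phi t b := by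
        rw [max_eq_right (by linarith)]
        ring
      rw [h1, min_eq_right (by linarith)]
      ring

omit hN in
lemma eval_mem {v : ℕ → ℝ} (hv : IsValuation t T v) (α : Formula) :
    eval t v α ∈ T.carrier := by
  induction α with
  | var i => exact hv i
  | bot => exact T.zero_mem
  | conj a b iha ihb => exact T.mul_mem _ iha _ ihb
  | impl a b iha ihb => exact T.resid_mem _ iha _ ihb

lemma eval_hom (hT : ∀ x ∈ T.carrier, x = 1 ∨ (x ∈ Icc 0 (beta t) ∧ x < beta t))
    {v : ℕ → ℝ} (hv : IsValuation t T v) (α : Formula) :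
    eval lukT (fun i => phihat t (v i)) α = phihat t (eval t v α) := by
  induction α with
  | var i => rfl
  | bot =>
      show (0:ℝ) = phihat t 0
      rw [phihat_low hN ⟨le_rfl, le_of_lt (beta_pos hN)⟩, phi_zero hN]
  | conj a b iha ihb =>
      show lukT.mul (eval lukT (fun i => phihat t (v i)) a)
          (eval lukT (fun i => phihat t (v i)) b) = phihat t (t.mul (eval t v a) (eval t v b))
      rw [iha, ihb, mul_hom hN hT (eval_mem hv a) (eval_mem hv b)]
  | impl a b iha ihb =>
      show resid lukT (eval lukT (fun i => phihat t (v i)) a)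
          (eval lukT (fun i => phihat t (v i)) b) = phihat t (resid t (eval t v a) (eval t v b))
      rw [iha, ihb, resid_hom hN hT (eval_mem hv a) (eval_mem hv b)]

end Final

/-! ### The two-valued case -/

lemma eval_bool {T : TruthAlg t} (hT : ∀ x ∈ T.carrier, x = 0 ∨ x = 1)
    {v : ℕ → ℝ} (hv : IsValuation t T v) (α : Formula) :
    eval t v α = eval lukT v α ∧ (eval t v α = 0 ∨ eval t v α = 1) := by
  have hmul : ∀ p q : ℝ, (p = 0 ∨ p = 1) → (q = 0 ∨ q = 1) →
      t.mul p q = lukT.mul p q ∧ (t.mul p q = 0 ∨ t.mul p q = 1) := by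
    rintro p q (rfl | rfl) (rfl | rfl)
    · rw [t.mul_zero' m0]
      constructor
      · show (0:ℝ) = max 0 (0 + 0 - 1); norm_num
      · exact Or.inl rfl
    · rw [t.comm 0 m0 1 m1, t.mul_zero' m1]
      constructor
      · show (0:ℝ) = max 0 (0 + 1 - 1); norm_num
      · exact Or.inl rfl
    · rw [t.mul_zero' m1]
      constructor
      · show (0:ℝ) = max 0 (1 + 0 - 1); norm_num
      · exact Or.inl rfl
    · rw [t.one_mul' 1 m1]
      constructor
      · show (1:ℝ) = max 0 (1 + 1 - 1); norm_num
      · exact Or.inr rfl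
  have hres : ∀ p q : ℝ, (p = 0 ∨ p = 1) → (q = 0 ∨ q = 1) →
      resid t p q = resid lukT p q ∧ (resid t p q = 0 ∨ resid t p q = 1) := by
    rintro p q (rfl | rfl) (rfl | rfl)
    · rw [resid_zero_left t le_rfl, luk_resid m0 m0]
      norm_num
    · rw [resid_zero_left t zero_le_one, luk_resid m0 m1]
      norm_num
    · rw [resid_one_zero t, luk_resid m1 m0]
      norm_num
    · rw [resid_eq_one_of_le t m1 m1 le_rfl, luk_resid m1 m1]
      norm_num
  induction α with
  | var i => exact ⟨rfl, hT (v i) (hv i)⟩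
  | bot => exact ⟨rfl, Or.inl rfl⟩
  | conj a b iha ihb =>
      obtain ⟨ha1, ha2⟩ := iha
      obtain ⟨hb1, hb2⟩ := ihb
      obtain ⟨h1, h2⟩ := hmul _ _ ha2 hb2
      constructor
      · show t.mul (eval t v a) (eval t v b) = lukT.mul (eval lukT v a) (eval lukT v b)
        rw [← ha1, ← hb1]; exact h1
      · exact h2
  | impl a b iha ihb =>
      obtain ⟨ha1, ha2⟩ := iha
      obtain ⟨hb1, hb2⟩ := ihb
      obtain ⟨h1, h2⟩ := hres _ _ ha2 hb2
      constructor
      · show resid t (eval t v a) (eval t v b) = resid lukT (eval lukT v a) (eval lukT v b)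
        rw [← ha1, ← hb1]; exact h1
      · exact h2


end Luk



/-- Any real-valued logic satisfying P2 extends Łukasiewicz logic. -/
theorem P2_implies_extends_Lukasiewicz (t : ContTNorm) (T : TruthAlg t)
    (h : P2 (Taut t T)) : Taut lukT (fullAlg lukT) ⊆ Taut t T := by
  intro α hα
  intro v hv
  have hsep : Luk.Sep t T := Luk.sep_of_P2 h
  by_cases hex : ∃ x ∈ T.carrier, x ≠ 0 ∧ x ≠ 1
  · -- nontrivial case
    obtain ⟨x₀, hx₀, hx0ne, hx1ne⟩ := hex
    have hx₀I := T.subset hx₀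
    have h0 : 0 < x₀ := lt_of_le_of_ne hx₀I.1 (Ne.symm hx0ne)
    have h1 : x₀ < 1 := lt_of_le_of_ne hx₀I.2 hx1ne
    obtain ⟨c, hc0, hc1, hc⟩ := Luk.nil_of_sep hsep hx₀ h0 h1
    have hN : (Luk.Nil t).Nonempty := ⟨x₀, hx₀I, h0, c, ⟨le_of_lt hc0, hc1⟩, hc0, hc⟩
    have hTnil : ∀ x ∈ T.carrier, x = 0 ∨ x = 1 ∨ x ∈ Luk.Nil t := by
      intro x hx
      by_cases hx0 : x = 0
      · exact Or.inl hx0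
      by_cases hx1 : x = 1
      · exact Or.inr (Or.inl hx1)
      have hxI := T.subset hx
      have hx0' : 0 < x := lt_of_le_of_ne hxI.1 (Ne.symm hx0)
      have hx1' : x < 1 := lt_of_le_of_ne hxI.2 hx1
      obtain ⟨c', hc0', hc1', hc'⟩ := Luk.nil_of_sep hsep hx hx0' hx1'
      exact Or.inr (Or.inr ⟨hxI, hx0', c', ⟨le_of_lt hc0', hc1'⟩, hc0', hc'⟩)
    have hT := Luk.T_struct hN hTnil
    set v' : ℕ → ℝ := fun i => Luk.phihat t (v i) with hv'def
    have hv' : IsValuation lukT (fullAlg lukT) v' := by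
      intro i
      show Luk.phihat t (v i) ∈ I01
      refine ⟨Luk.phihat_nonneg hN _, Luk.phihat_le_one hN ?_⟩
      rcases hT (v i) (hv i) with h | h
      · exact Or.inr h
      · exact Or.inl h.1
    have heval := Luk.eval_hom hN hT hv α
    have htaut := hα v' hv'
    rw [htaut] at heval
    have hememb := Luk.eval_mem hv α
    rcases hT _ hememb with h | h
    · exact h
    · exfalso
      rw [Luk.phihat_low hN h.1] at heval
      have := Luk.phi_lt_one hN h.1 h.2
      rw [← heval] at this
      exact lt_irrefl _ this
  · -- two-valued case
    push_neg at hex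
    have hT : ∀ x ∈ T.carrier, x = 0 ∨ x = 1 := by
      intro x hx
      by_cases h0 : x = 0
      · exact Or.inl h0
      · exact Or.inr (hex x hx h0)
    have hv' : IsValuation lukT (fullAlg lukT) v := fun i => T.subset (hv i)
    have := (Luk.eval_bool hT hv α).1
    rw [this]
    exact hα v hv' 

end
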